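/- arXiv:2306.10475 — 6 statements merged into one kernel-verified Lean document; each statement's English description precedes it below -/
import Mathlib

section
/- Let G = ∏_{r=1}^d G_r be the Cartesian product of d copies of the cycle graph C_{p₁}, so that G has p = p₁^d vertices. Fix j* ∈ V(G) and z* ∈ {1,…,n}, set τ := min(z*/n, 1 − z*/n), and assume nτ ≥ 2p₁. Then m_G(1/(4d)) ≥ p/8^d. -/
open MeasureTheory ProbabilityTheory Finset

noncomputable section

attribute [local instance] Classical.propDecidable

/-- The CUSUM transform of a `p × n` data matrix, at coordinate `j` and (1-based) time `t`. -/
def cusum (n : ℕ) {V : Type} (M : V × Fin n → ℝ) (j : V) (t : ℕ) : ℝ :=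
  Real.sqrt ((t : ℝ) * ((n : ℝ) - (t : ℝ)) / (n : ℝ)) *
    ((1 / ((n : ℝ) - (t : ℝ))) * ∑ r ∈ univ.filter (fun r : Fin n => t ≤ (r : ℕ)), M (j, r)
      - (1 / (t : ℝ)) * ∑ r ∈ univ.filter (fun r : Fin n => (r : ℕ) < t), M (j, r))

/-- The quadratic SpreadDetect statistic. -/
def Qstat (n : ℕ) {V : Type} [Fintype V] (gd : V → V → ℕ) (X : V × Fin n → ℝ)
    (j : V) (t : ℕ) : ℝ :=
  ∑ k ∈ univ.filter (fun k : V => t + gd j k < n), ((cusum n X k (t + gd j k)) ^ 2 - 1)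

/-- The linear SpreadDetect statistic. -/
def Lstat (n : ℕ) {V : Type} [Fintype V] (gd : V → V → ℕ) (X : V × Fin n → ℝ)
    (j : V) (t : ℕ) : ℝ :=
  |∑ k ∈ univ.filter (fun k : V => t + gd j k < n), cusum n X k (t + gd j k)|

/-- The law `P_{j*,z*,μ⁰,μ¹}` of the data matrix. -/
def spreadMeasure (n : ℕ) {V : Type} [Fintype V] (gd : V → V → ℕ) (jstar : V) (zstar : ℕ)
    (μ0 μ1 : V → ℝ) : Measure (V × Fin n → ℝ) :=
  Measure.pi (fun jt : V × Fin n =>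
    gaussianReal (if (jt.2 : ℕ) + 1 ≤ zstar + gd jt.1 jstar then μ0 jt.1 else μ1 jt.1) 1)

/-- The set `𝒥_{t*,k*}(C₁)`. -/
def JSet {V : Type} [Fintype V] (gd : V → V → ℕ) (jstar : V) (zstar : ℕ) (C1 : ℝ)
    (tstar : ℕ) (kstar : V) : Finset V :=
  univ.filter (fun j : V =>
    C1 * (|(zstar : ℝ) - (tstar : ℝ)| + (gd jstar kstar : ℝ)) ≤
      |((zstar : ℝ) + (gd j jstar : ℝ)) - ((tstar : ℝ) + (gd j kstar : ℝ))|)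

/-- `m_G(C₁)`, the minimal cardinality of `𝒥_{t*,k*}(C₁)` over `t* ∈ {1,…,n−1}`, `k* ∈ V`. -/
def mG (n : ℕ) {V : Type} [Fintype V] (gd : V → V → ℕ) (jstar : V) (zstar : ℕ)
    (C1 : ℝ) : ℕ :=
  sInf {c : ℕ | ∃ tstar : ℕ, 1 ≤ tstar ∧ tstar ≤ n - 1 ∧ ∃ kstar : V,
    c = (JSet gd jstar zstar C1 tstar kstar).card}

/-- The distance on the cycle graph `C_{p₁}` with vertices `Fin p₁`. -/
def cycleDist (p1 : ℕ) (a b : Fin p1) : ℕ :=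
  min ((a : ℤ) - (b : ℤ)).natAbs (p1 - ((a : ℤ) - (b : ℤ)).natAbs)

/-- The distance on the `d`-fold Cartesian product of cycles `C_{p₁}`. -/
def torusDist (p1 d : ℕ) (x y : Fin d → Fin p1) : ℕ :=
  ∑ r : Fin d, cycleDist p1 (x r) (y r)


namespace MGAux


/-- reduction mod p as an element of `Fin p`. -/
def psi (p : ℕ) (hp : 0 < p) (x : ℤ) : Fin p :=
  ⟨(x % p).toNat, by
    have h2 : x % p < p := Int.emod_lt_of_pos x (by exact_mod_cast hp)
    have h1 : 0 ≤ x % p := Int.emod_nonneg x (by exact_mod_cast hp.ne')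
    omega⟩

lemma psi_val (p : ℕ) (hp : 0 < p) (x : ℤ) : ((psi p hp x : Fin p) : ℤ) = x % p := by
  have h1 : 0 ≤ x % p := Int.emod_nonneg x (by exact_mod_cast hp.ne')
  simp only [psi]
  omega

lemma psi_coe (p : ℕ) (hp : 0 < p) (a : Fin p) : psi p hp (a : ℤ) = a := by
  apply Fin.ext
  have h : ((a : ℤ)) % p = (a : ℤ) := Int.emod_eq_of_lt (by positivity) (by exact_mod_cast a.isLt)
  simp [psi, h]

lemma cycleDist_psi (p : ℕ) (hp : 0 < p) (x y z : ℤ) (hz : 2 * z.natAbs ≤ p)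
    (hk : ∃ k : ℤ, x - y - z = k * p) :
    cycleDist p (psi p hp x) (psi p hp y) = z.natAbs := by
  obtain ⟨k, hk⟩ := hk
  unfold cycleDist
  rw [psi_val, psi_val]
  set a : ℤ := x % p with ha
  set b : ℤ := y % p with hb0
  have ha1 : 0 ≤ a := Int.emod_nonneg x (by exact_mod_cast hp.ne')
  have ha2 : a < p := Int.emod_lt_of_pos x (by exact_mod_cast hp)
  have hb1 : 0 ≤ b := Int.emod_nonneg y (by exact_mod_cast hp.ne')
  have hb2 : b < p := Int.emod_lt_of_pos y (by exact_mod_cast hp)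
  have haq : a = x - p * (x / p) := Int.emod_def x p
  have hbq : b = y - p * (y / p) := Int.emod_def y p
  set K : ℤ := k - x / p + y / p with hKdef
  have hwz : a - b - z = K * p := by
    rw [haq, hbq, hKdef]; linear_combination hk
  clear_value a b K
  have hbnd : (a - b - z).natAbs < 2 * p := by omega
  rw [hwz, Int.natAbs_mul, Int.natAbs_natCast] at hbnd
  have hK2 : K.natAbs < 2 := by
    by_contra hc
    push_neg at hc
    have : 2 * p ≤ K.natAbs * p := Nat.mul_le_mul_right p hc
    omega
  have hKcase : K = -1 ∨ K = 0 ∨ K = 1 := by omega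
  have hab : a - b = z + K * p := by linarith [hwz]
  rcases hKcase with h | h | h <;> subst h <;> omega

lemma psi_inj (p : ℕ) (hp : 0 < p) {x y : ℤ} (hxy : (x - y).natAbs < p)
    (h : psi p hp x = psi p hp y) : x = y := by
  have h2 : x % p = y % p := by
    have := congrArg (fun a : Fin p => (a : ℤ)) h
    simpa [psi_val] using this
  have hxq : x % p = x - p * (x / p) := Int.emod_def x p
  have hyq : y % p = y - p * (y / p) := Int.emod_def y p
  have hd : x - y = (x / p - y / p) * p := by
    rw [hxq, hyq] at h2; linear_combination h2
  set K : ℤ := x / p - y / p with hK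
  rw [hd, Int.natAbs_mul, Int.natAbs_natCast] at hxy
  have hK0 : K.natAbs = 0 := by
    by_contra hc
    have : 1 * p ≤ K.natAbs * p := Nat.mul_le_mul_right p (by omega)
    omega
  have hKz : K = 0 := by omega
  rw [hKz] at hd
  linarith

lemma cycleDist_comm (p : ℕ) (a b : Fin p) : cycleDist p a b = cycleDist p b a := by
  unfold cycleDist
  omega

/-- Key per-coordinate counting lemma. -/
lemma cycle_key (p : ℕ) (hp : 3 ≤ p) (u v : Fin p) :
    p ≤ 8 * (univ.filter (fun a : Fin p =>
      (cycleDist p u v : ℤ) ≤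
        2 * ((cycleDist p a u : ℤ) - (cycleDist p a v : ℤ)))).card := by
  have hp0 : 0 < p := by omega
  set m := cycleDist p u v with hm
  set A : ℤ := (u : ℤ) with hA
  set B : ℤ := (v : ℤ) with hB
  have hu1 : 0 ≤ A := by positivity
  have hu2 : A < p := by rw [hA]; exact_mod_cast u.isLt
  have hv1 : 0 ≤ B := by positivity
  have hv2 : B < p := by rw [hB]; exact_mod_cast v.isLt
  have hmdef : m = min ((A - B).natAbs) (p - (A - B).natAbs) := by rw [hm]; rfl
  have hmp : 2 * m ≤ p := by omega
  have hσ : ∃ σ k : ℤ, B - A - σ = k * p ∧ σ.natAbs = m ∧ 2 * σ.natAbs ≤ p := by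
    by_cases h : 2 * (B - A).natAbs ≤ p
    · exact ⟨B - A, 0, by ring, by omega, h⟩
    · by_cases h2 : 0 ≤ B - A
      · exact ⟨B - A - p, 1, by ring, by omega, by omega⟩
      · exact ⟨B - A + p, -1, by ring, by omega, by omega⟩
  obtain ⟨σ, k, hk, hσm, hσp⟩ := hσ
  set e : ℤ := if 0 ≤ σ then 1 else -1 with he
  have he1 : e = 1 ∨ e = -1 := by rw [he]; split <;> simp
  have hem : σ = e * m := by rw [he]; split <;> omega
  set T : ℕ := m - m / 4 with hT
  set K : ℕ := p / 2 with hKK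
  set f : ℕ → Fin p := fun t => psi p hp0 (A + e * t) with hf
  have hmem : ∀ t ∈ Finset.Icc T K, f t ∈ (univ.filter (fun a : Fin p =>
      (m : ℤ) ≤
        2 * ((cycleDist p a u : ℤ) - (cycleDist p a v : ℤ)))) := by
    intro t ht
    rw [Finset.mem_Icc] at ht
    rw [Finset.mem_filter]
    refine ⟨Finset.mem_univ _, ?_⟩
    have h1 : cycleDist p (f t) u = t := by
      conv_lhs => rw [show u = psi p hp0 A from (psi_coe p hp0 u).symm]
      have := cycleDist_psi p hp0 (A + e * t) A (e * t)
        (by rcases he1 with h | h <;> rw [h] <;> omega)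
        ⟨0, by ring⟩
      rw [this]
      rcases he1 with h | h <;> rw [h] <;> omega
    have h2 : cycleDist p (f t) v = ((t : ℤ) - m).natAbs := by
      conv_lhs => rw [show v = psi p hp0 B from (psi_coe p hp0 v).symm]
      have habs : (e * ((t : ℤ) - m)).natAbs = ((t : ℤ) - m).natAbs := by
        rcases he1 with h | h <;> rw [h] <;> omega
      have := cycleDist_psi p hp0 (A + e * t) B (e * ((t : ℤ) - m))
        (by rw [habs]; omega)
        ⟨-k, by rw [hem] at hk; linear_combination -hk⟩
      rw [this, habs]
    rw [h1, h2]
    omega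
  have hinj : Set.InjOn f (Finset.Icc T K) := by
    intro t1 h1 t2 h2 hfe
    rw [Finset.coe_Icc, Set.mem_Icc] at h1 h2
    have heq := psi_inj p hp0 (x := A + e * t1) (y := A + e * t2)
      (by
        have hrw : (A + e * t1 - (A + e * t2)) = e * ((t1 : ℤ) - t2) := by ring
        rw [hrw]
        rcases he1 with h | h <;> rw [h] <;> omega) hfe
    rcases he1 with h | h <;> rw [h] at heq <;> omega
  have hcard := Finset.card_le_card_of_injOn f hmem hinj
  rw [Nat.card_Icc] at hcard
  omega


lemma torusDist_comm (p1 d : ℕ) (x y : Fin d → Fin p1) :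
    torusDist p1 d x y = torusDist p1 d y x := by
  unfold torusDist
  refine Finset.sum_congr rfl fun r _ => ?_
  unfold cycleDist
  omega

lemma main_aux (d p1 : ℕ) (hd : 1 ≤ d) (hp1 : 3 ≤ p1) (jstar kstar : Fin d → Fin p1)
    (zstar tstar : ℕ) :
    p1 ^ d ≤ 8 ^ d *
      (JSet (torusDist p1 d) jstar zstar (1 / (4 * (d : ℝ))) tstar kstar).card := by
  set Δ : ℤ := (zstar : ℤ) - tstar with hΔdef
  set S : Fin d → Finset (Fin p1) := fun r =>
    if 0 ≤ Δ then
      univ.filter (fun a : Fin p1 => (cycleDist p1 (jstar r) (kstar r) : ℤ) ≤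
        2 * ((cycleDist p1 a (jstar r) : ℤ) - (cycleDist p1 a (kstar r) : ℤ)))
    else
      univ.filter (fun a : Fin p1 => (cycleDist p1 (kstar r) (jstar r) : ℤ) ≤
        2 * ((cycleDist p1 a (kstar r) : ℤ) - (cycleDist p1 a (jstar r) : ℤ)))
    with hS
  have hScard : ∀ r, p1 ≤ 8 * (S r).card := by
    intro r
    rw [hS]
    split
    · exact cycle_key p1 hp1 (jstar r) (kstar r)
    · exact cycle_key p1 hp1 (kstar r) (jstar r)
  have hsub : Fintype.piFinset S ⊆
      JSet (torusDist p1 d) jstar zstar (1 / (4 * (d : ℝ))) tstar kstar := by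
    intro j hj
    rw [Fintype.mem_piFinset] at hj
    have hkey : (Δ.natAbs : ℤ) + (torusDist p1 d jstar kstar : ℤ) ≤
        2 * ((Δ + ((torusDist p1 d j jstar : ℤ) - (torusDist p1 d j kstar : ℤ))).natAbs : ℤ) := by
      by_cases hpos : 0 ≤ Δ
      · have hsum : (torusDist p1 d jstar kstar : ℤ) ≤
            2 * ((torusDist p1 d j jstar : ℤ) - (torusDist p1 d j kstar : ℤ)) := by
          unfold torusDist
          push_cast
          rw [← Finset.sum_sub_distrib, Finset.mul_sum]
          apply Finset.sum_le_sum
          intro r _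
          have hjr := hj r
          simp only [hS, if_pos hpos, Finset.mem_filter] at hjr
          exact hjr.2
        omega
      · have hsum : (torusDist p1 d jstar kstar : ℤ) ≤
            2 * ((torusDist p1 d j kstar : ℤ) - (torusDist p1 d j jstar : ℤ)) := by
          rw [torusDist_comm p1 d jstar kstar]
          unfold torusDist
          push_cast
          rw [← Finset.sum_sub_distrib, Finset.mul_sum]
          apply Finset.sum_le_sum
          intro r _
          have hjr := hj r
          simp only [hS, if_neg hpos, Finset.mem_filter] at hjr
          exact hjr.2
        omega
    simp only [JSet, Finset.mem_filter, Finset.mem_univ, true_and]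
    have e1 : |(zstar : ℝ) - (tstar : ℝ)| = (Δ.natAbs : ℝ) := by
      rw [Nat.cast_natAbs]
      congr 1
      rw [hΔdef]
      push_cast
      ring
    have e2 : (zstar : ℝ) + (torusDist p1 d j jstar : ℝ)
        - ((tstar : ℝ) + (torusDist p1 d j kstar : ℝ))
        = ((Δ + ((torusDist p1 d j jstar : ℤ) - (torusDist p1 d j kstar : ℤ)) : ℤ) : ℝ) := by
      rw [hΔdef]
      push_cast
      ring
    rw [e1, e2, ← Int.cast_abs, ← Nat.cast_natAbs]
    have hkeyR : (Δ.natAbs : ℝ) + (torusDist p1 d jstar kstar : ℝ) ≤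
        2 * (((Δ + ((torusDist p1 d j jstar : ℤ) - (torusDist p1 d j kstar : ℤ))).natAbs : ℝ)) := by
      exact_mod_cast hkey
    have hX0 : (0 : ℝ) ≤ (Δ.natAbs : ℝ) + (torusDist p1 d jstar kstar : ℝ) := by positivity
    have hd1 : (1 : ℝ) ≤ (d : ℝ) := by exact_mod_cast hd
    have h42 : 1 / (4 * (d : ℝ)) ≤ 1 / 2 := by
      rw [div_le_div_iff₀ (by linarith) (by norm_num)]
      linarith
    calc 1 / (4 * (d : ℝ)) * ((Δ.natAbs : ℝ) + (torusDist p1 d jstar kstar : ℝ))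
        ≤ 1 / 2 * ((Δ.natAbs : ℝ) + (torusDist p1 d jstar kstar : ℝ)) :=
          mul_le_mul_of_nonneg_right h42 hX0
      _ ≤ _ := by
          push_cast at hkeyR ⊢
          linarith
  have h1 : (Fintype.piFinset S).card ≤
      (JSet (torusDist p1 d) jstar zstar (1 / (4 * (d : ℝ))) tstar kstar).card :=
    Finset.card_le_card hsub
  calc p1 ^ d = ∏ _r : Fin d, p1 := by
        rw [Finset.prod_const, Finset.card_univ, Fintype.card_fin]
    _ ≤ ∏ r : Fin d, (8 * (S r).card) := Finset.prod_le_prod' (fun r _ => hScard r)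
    _ = 8 ^ d * ∏ r : Fin d, (S r).card := by
        rw [Finset.prod_mul_distrib, Finset.prod_const, Finset.card_univ, Fintype.card_fin]
    _ = 8 ^ d * (Fintype.piFinset S).card := by rw [Fintype.card_piFinset]
    _ ≤ _ := Nat.mul_le_mul_left _ h1

end MGAux

/-- Proposition 2: for the d-fold product of cycles C_{p1}, m_G(1/(4d)) ≥ p/8^d. -/
theorem mG_torus_lower_bound :
    ∀ (n d p1 : ℕ), 1 ≤ n → 1 ≤ d → 3 ≤ p1 →
    ∀ (jstar : Fin d → Fin p1) (zstar : ℕ), 1 ≤ zstar → zstar ≤ n →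
    ∀ τ : ℝ, τ = min ((zstar : ℝ) / n) (1 - (zstar : ℝ) / n) →
      2 * (p1 : ℝ) ≤ (n : ℝ) * τ →
      ((p1 : ℝ) ^ d) / 8 ^ d ≤
        (mG n (torusDist p1 d) jstar zstar (1 / (4 * (d : ℝ))) : ℝ) := by
  intro n d p1 hn hd hp1 jstar zstar hz1 hz2 τ hτ hnτ
  have ht1 : τ ≤ (zstar : ℝ) / n := hτ ▸ min_le_left _ _
  have ht2 : τ ≤ 1 - (zstar : ℝ) / n := hτ ▸ min_le_right _ _
  have hn0 : (0 : ℝ) < n := by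
    have : (1 : ℝ) ≤ n := by exact_mod_cast hn
    linarith
  have hp3 : (3 : ℝ) ≤ p1 := by exact_mod_cast hp1
  have h12 : (12 : ℝ) ≤ n := by
    nlinarith [mul_nonneg hn0.le (by linarith : (0 : ℝ) ≤ 1 - 2 * τ)]
  have hn2 : 2 ≤ n := by exact_mod_cast (by linarith : (2 : ℝ) ≤ (n : ℝ))
  have hmg : p1 ^ d ≤ 8 ^ d * mG n (torusDist p1 d) jstar zstar (1 / (4 * (d : ℝ))) := by
    have hne : {c : ℕ | ∃ tstar : ℕ, 1 ≤ tstar ∧ tstar ≤ n - 1 ∧ ∃ kstar : Fin d → Fin p1,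
        c = (JSet (torusDist p1 d) jstar zstar (1 / (4 * (d : ℝ))) tstar kstar).card}.Nonempty :=
      ⟨_, 1, le_refl 1, by omega, jstar, rfl⟩
    have hm := Nat.sInf_mem hne
    obtain ⟨t0, _, _, k0, hk0⟩ := hm
    unfold mG
    rw [hk0]
    exact MGAux.main_aux d p1 hd hp1 jstar k0 zstar t0
  have hR : ((p1 : ℝ)) ^ d ≤ 8 ^ d *
      (mG n (torusDist p1 d) jstar zstar (1 / (4 * (d : ℝ))) : ℝ) := by
    exact_mod_cast hmg
  rw [div_le_iff₀ (by positivity : (0 : ℝ) < 8 ^ d)]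
  linarith


end
end

section
/- Let G = C_p be the cycle graph on p vertices, and fix j*, k* ∈ {1,…,p}, z* ∈ {1,…,n} and t* ∈ {1,…,n−1}. Set τ := min(z*/n, 1 − z*/n) and assume nτ ≥ 2p. For j ∈ {1,…,p}, define ℓ(j) := (z* + d_G(j, j*)) − (t* + d_G(j, k*)), and let sgn(x) := 1 if x ≥ 0 and −1 if x < 0. Then the set 𝒥 := { j ∈ {1,…,p} : sgn(z* − t*)·ℓ(j) ≥ (|z* − t*| + d_G(j*, k*))/4 } has cardinality at least p/8. -/
open MeasureTheory ProbabilityTheory Finset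

noncomputable section

attribute [local instance] Classical.propDecidable

lemma cycleDist_comm (p : ℕ) (a b : Fin p) : cycleDist p a b = cycleDist p b a := by
  simp only [cycleDist]; omega

lemma count_aux {p : ℕ} (P : Fin p → Prop) [DecidablePred P] (g : ℕ → Fin p) (N : ℕ)
    (hinj : ∀ m < N, ∀ m' < N, g m = g m' → m = m')
    (hmem : ∀ m < N, P (g m)) :
    N ≤ (univ.filter P).card := by
  have h := Finset.card_le_card_of_injOn (f := g) (s := Finset.range N)
      (t := univ.filter P)
      (fun m hm => by
        simp only [Finset.mem_coe, Finset.coe_range, Set.mem_Iio, Finset.mem_range] at hm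
        simp only [Finset.mem_coe, mem_filter, mem_univ, true_and]
        exact hmem m hm)
      (fun m hm m' hm' h => hinj m (by simpa using hm) m' (by simpa using hm') h)
  simpa using h

lemma key_lemma (p : ℕ) (hp : 3 ≤ p) (a b : Fin p) :
    (p : ℝ) / 8 ≤ ((univ.filter (fun j : Fin p =>
      (cycleDist p a b : ℝ) / 4 ≤ (cycleDist p j a : ℝ) - (cycleDist p j b : ℝ))).card : ℝ) := by
  have hp0 : 0 < p := by omega
  have ha := a.isLt
  have hb := b.isLt
  set δ := cycleDist p a b with hδ
  have hδ' : δ = min ((a:ℤ) - (b:ℤ)).natAbs (p - ((a:ℤ) - (b:ℤ)).natAbs) := rfl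
  have hδp : 2 * δ ≤ p := by omega
  set N : ℕ := (4 * p + 8 - 5 * δ) / 8 with hN
  have hN1 : N ≤ p := by omega
  have hN2 : p ≤ 8 * N := by omega
  have hcases : ((b:ℤ) = a + δ ∨ (b:ℤ) = a + δ - p) ∨ ((b:ℤ) = a - δ ∨ (b:ℤ) = a - δ + p) := by
    omega
  have final : ∀ (g : ℕ → Fin p),
      (∀ m < N, ∀ m' < N, g m = g m' → m = m') →
      (∀ m < N, (δ : ℝ) / 4 ≤ (cycleDist p (g m) a : ℝ) - (cycleDist p (g m) b : ℝ)) →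
      (p : ℝ) / 8 ≤ ((univ.filter (fun j : Fin p =>
        (δ : ℝ) / 4 ≤ (cycleDist p j a : ℝ) - (cycleDist p j b : ℝ))).card : ℝ) := by
    intro g hinj hmem
    have hcard := count_aux (fun j : Fin p =>
      (δ : ℝ) / 4 ≤ (cycleDist p j a : ℝ) - (cycleDist p j b : ℝ)) g N hinj hmem
    have h8 : (p:ℝ) ≤ 8 * N := by exact_mod_cast hN2
    have hc : (N:ℝ) ≤ _ := Nat.cast_le.mpr hcard
    linarith
  have mem_aux : ∀ (x : ℕ) (hx : x < p),
      ((x:ℤ) = b.val + δ + (0:ℤ) ∨ (x:ℤ) = ↑b.val + δ - p ∨ (x:ℤ) = ↑b.val - δ ∨ (x:ℤ) = ↑b.val - δ + p) →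
      True := fun _ _ _ => trivial
  rcases hcases with hP | hM
  · -- direction +1 : g m = b + m (mod p)
    have hmod : ∀ m, m < p → (((b.val + m) % p : ℕ) : ℤ) = b.val + m ∨
        (((b.val + m) % p : ℕ) : ℤ) = b.val + m - p := by
      intro m hm
      rcases Nat.lt_or_ge (b.val + m) p with h | h
      · rw [Nat.mod_eq_of_lt h]; omega
      · rw [Nat.mod_eq_sub_mod h, Nat.mod_eq_of_lt (by omega)]; omega
    refine final (fun m => ⟨(b.val + m) % p, Nat.mod_lt _ hp0⟩) ?_ ?_
    · intro m hm m' hm' he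
      have e1 := hmod m (by omega)
      have e2 := hmod m' (by omega)
      simp only [Fin.mk.injEq] at he
      omega
    · intro m hm
      set x := (b.val + m) % p with hxdef
      have hxlt : x < p := Nat.mod_lt _ hp0
      have e1 : (x : ℤ) = b.val + m ∨ (x : ℤ) = b.val + m - p := hmod m (by omega)
      show (δ : ℝ) / 4 ≤ (cycleDist p ⟨x, hxlt⟩ a : ℝ) - (cycleDist p ⟨x, hxlt⟩ b : ℝ)
      clear_value x
      clear hxdef
      have hm8 : 8 * m + 5 * δ ≤ 4 * p := by omega
      have hnat : δ + 4 * cycleDist p ⟨x, hxlt⟩ b ≤ 4 * cycleDist p ⟨x, hxlt⟩ a := by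
        simp only [cycleDist]
        omega
      have h4 := (Nat.cast_le (α := ℝ)).mpr hnat
      push_cast at h4
      linarith
  · -- direction -1 : g m = b - m (mod p)
    have hmod : ∀ m, m < p → (((b.val + p - m) % p : ℕ) : ℤ) = b.val - m ∨
        (((b.val + p - m) % p : ℕ) : ℤ) = b.val + p - m := by
      intro m hm
      rcases Nat.lt_or_ge (b.val + p - m) p with h | h
      · rw [Nat.mod_eq_of_lt h]; omega
      · rw [Nat.mod_eq_sub_mod h, Nat.mod_eq_of_lt (by omega)]; omega
    refine final (fun m => ⟨(b.val + p - m) % p, Nat.mod_lt _ hp0⟩) ?_ ?_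
    · intro m hm m' hm' he
      have e1 := hmod m (by omega)
      have e2 := hmod m' (by omega)
      simp only [Fin.mk.injEq] at he
      omega
    · intro m hm
      set x := (b.val + p - m) % p with hxdef
      have hxlt : x < p := Nat.mod_lt _ hp0
      have e1 : (x : ℤ) = b.val - m ∨ (x : ℤ) = b.val + p - m := hmod m (by omega)
      show (δ : ℝ) / 4 ≤ (cycleDist p ⟨x, hxlt⟩ a : ℝ) - (cycleDist p ⟨x, hxlt⟩ b : ℝ)
      clear_value x
      clear hxdef
      have hm8 : 8 * m + 5 * δ ≤ 4 * p := by omega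
      have hnat : δ + 4 * cycleDist p ⟨x, hxlt⟩ b ≤ 4 * cycleDist p ⟨x, hxlt⟩ a := by
        simp only [cycleDist]
        omega
      have h4 := (Nat.cast_le (α := ℝ)).mpr hnat
      push_cast at h4
      linarith

/-- Proposition 4: on the cycle graph with nτ ≥ 2p, a set of cardinality at least p/8 of
coordinates have signed discrepancy at least (|z*−t*| + d(j*,k*))/4. -/
theorem cycle_signed_discrepancy_set_lower_bound :
    ∀ (n p : ℕ), 1 ≤ n → 3 ≤ p →
    ∀ (jstar kstar : Fin p) (zstar tstar : ℕ),
      1 ≤ zstar → zstar ≤ n → 1 ≤ tstar → tstar ≤ n - 1 →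
    ∀ τ : ℝ, τ = min ((zstar : ℝ) / n) (1 - (zstar : ℝ) / n) →
      2 * (p : ℝ) ≤ (n : ℝ) * τ →
      (p : ℝ) / 8 ≤
        ((univ.filter (fun j : Fin p =>
          (|(zstar : ℝ) - (tstar : ℝ)| + (cycleDist p jstar kstar : ℝ)) / 4 ≤
            (if (tstar : ℝ) ≤ (zstar : ℝ) then (1 : ℝ) else -1) *
              (((zstar : ℝ) + (cycleDist p j jstar : ℝ))
                - ((tstar : ℝ) + (cycleDist p j kstar : ℝ))))).card : ℝ) := by
  intro n p hn hp jstar kstar zstar tstar hz1 hz2 ht1 ht2 τ hτ hτ2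
  by_cases hts : (tstar : ℝ) ≤ (zstar : ℝ)
  · have habs : |(zstar : ℝ) - tstar| = (zstar : ℝ) - tstar := abs_of_nonneg (by linarith)
    refine le_trans (key_lemma p hp jstar kstar) ?_
    have hsub : (univ.filter (fun j : Fin p =>
        (cycleDist p jstar kstar : ℝ) / 4 ≤
          (cycleDist p j jstar : ℝ) - (cycleDist p j kstar : ℝ))) ⊆
        (univ.filter (fun j : Fin p =>
          (|(zstar : ℝ) - (tstar : ℝ)| + (cycleDist p jstar kstar : ℝ)) / 4 ≤
            (if (tstar : ℝ) ≤ (zstar : ℝ) then (1 : ℝ) else -1) *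
              (((zstar : ℝ) + (cycleDist p j jstar : ℝ))
                - ((tstar : ℝ) + (cycleDist p j kstar : ℝ))))) := by
      intro j hj
      simp only [mem_filter, mem_univ, true_and] at hj ⊢
      rw [if_pos hts, habs]
      linarith
    exact_mod_cast Finset.card_le_card hsub
  · have hlt : (zstar : ℝ) < tstar := lt_of_not_ge hts
    have habs : |(zstar : ℝ) - tstar| = (tstar : ℝ) - zstar := by
      rw [abs_of_nonpos (by linarith)]; ring
    refine le_trans (key_lemma p hp kstar jstar) ?_
    have hcomm : (cycleDist p kstar jstar : ℝ) = (cycleDist p jstar kstar : ℝ) := by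
      rw [cycleDist_comm]
    have hsub : (univ.filter (fun j : Fin p =>
        (cycleDist p kstar jstar : ℝ) / 4 ≤
          (cycleDist p j kstar : ℝ) - (cycleDist p j jstar : ℝ))) ⊆
        (univ.filter (fun j : Fin p =>
          (|(zstar : ℝ) - (tstar : ℝ)| + (cycleDist p jstar kstar : ℝ)) / 4 ≤
            (if (tstar : ℝ) ≤ (zstar : ℝ) then (1 : ℝ) else -1) *
              (((zstar : ℝ) + (cycleDist p j jstar : ℝ))
                - ((tstar : ℝ) + (cycleDist p j kstar : ℝ))))) := by
      intro j hj
      simp only [mem_filter, mem_univ, true_and] at hj ⊢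
      rw [if_neg hts, habs]
      rw [hcomm] at hj
      linarith
    exact_mod_cast Finset.card_le_card hsub


end
end

section
/- There exists a universal constant C > 0 such that the following holds. Let G be a connected graph on vertex set {1,…,p}, fix z* ∈ {1,…,n−1}, j* ∈ {1,…,p} and C₁ > 0, set τ := min(z*/n, 1 − z*/n), and assume nτ ≥ 2p. Let W ∈ ℝ^{p×n} have independent N(0,1) entries and set E := 𝒯(W). Then with probability at least 1 − 1/(pn), simultaneously for all t* ∈ {1,…,n−1} and k* ∈ {1,…,p} such that t* + d_G(j, k*) ≤ n − 1 for every j ∈ 𝒥_{t*,k*}(C₁), we have Σ_{j ∈ 𝒥_{t*,k*}(C₁)} ( E_{j, z* + d_G(j,j*)} − E_{j, t* + d_G(j,k*)} ) ≤ C·√( |𝒥_{t*,k*}(C₁)|·(|z* − t*| + d_G(k*, j*))·log(pn)/(nτ) ). -/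
open MeasureTheory ProbabilityTheory Finset

noncomputable section

attribute [local instance] Classical.propDecidable

set_option maxHeartbeats 1000000

lemma pdf_shift (c x : ℝ) :
    Real.exp (c * x) * gaussianPDFReal 0 1 x = Real.exp (c ^ 2 / 2) * gaussianPDFReal c 1 x := by
  simp only [gaussianPDFReal, NNReal.coe_one, sub_zero, mul_one]
  rw [mul_left_comm, mul_left_comm (Real.exp (c^2/2)), ← Real.exp_add, ← Real.exp_add]
  congr 2
  ring

lemma gauss_int_transfer (g : ℝ → ℝ) :
    ∫ x, g x ∂(gaussianReal 0 1) = ∫ x, g x * gaussianPDFReal 0 1 x := by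
  rw [gaussianReal_of_var_ne_zero 0 one_ne_zero]
  have hm : Measurable fun x => (gaussianPDFReal 0 1 x).toNNReal :=
    (measurable_gaussianPDFReal 0 1).real_toNNReal
  have : (gaussianPDF 0 1) = fun x => ((gaussianPDFReal 0 1 x).toNNReal : ENNReal) := by
    funext x; rw [gaussianPDF]; rfl
  rw [this, integral_withDensity_eq_integral_smul hm]
  congr 1; funext x
  rw [NNReal.smul_def, smul_eq_mul, Real.coe_toNNReal _ (gaussianPDFReal_nonneg 0 1 x), mul_comm]

lemma gauss_integrable_exp (c : ℝ) :
    Integrable (fun x => Real.exp (c * x)) (gaussianReal 0 1) := by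
  rw [gaussianReal_of_var_ne_zero 0 one_ne_zero]
  have hm : Measurable fun x => (gaussianPDFReal 0 1 x).toNNReal :=
    (measurable_gaussianPDFReal 0 1).real_toNNReal
  have h : (gaussianPDF 0 1) = fun x => ((gaussianPDFReal 0 1 x).toNNReal : ENNReal) := by
    funext x; rw [gaussianPDF]; rfl
  rw [h, integrable_withDensity_iff_integrable_smul hm]
  have : (fun x => (gaussianPDFReal 0 1 x).toNNReal • Real.exp (c * x))
      = fun x => Real.exp (c ^ 2 / 2) * gaussianPDFReal c 1 x := by
    funext x
    rw [NNReal.smul_def, smul_eq_mul, Real.coe_toNNReal _ (gaussianPDFReal_nonneg 0 1 x),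
      mul_comm, pdf_shift]
  rw [this]
  exact (integrable_gaussianPDFReal c 1).const_mul _

lemma gauss_mgf (c : ℝ) :
    ∫ x, Real.exp (c * x) ∂(gaussianReal 0 1) = Real.exp (c ^ 2 / 2) := by
  rw [gauss_int_transfer]
  simp_rw [pdf_shift]
  rw [MeasureTheory.integral_const_mul, integral_gaussianPDFReal_eq_one c one_ne_zero, mul_one]

lemma pi_exp_prod {ι : Type} [Fintype ι] (α : ι → ℝ) (c : ℝ) (W : ι → ℝ) :
    Real.exp (c * ∑ i, α i * W i) = ∏ i, Real.exp (c * α i * W i) := by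
  rw [← Real.exp_sum, Finset.mul_sum]
  congr 1; funext; ring_nf

lemma pi_mgf_integrable {ι : Type} [Fintype ι] (α : ι → ℝ) (c : ℝ) :
    Integrable (fun W : ι → ℝ => Real.exp (c * ∑ i, α i * W i))
      (Measure.pi fun _ => gaussianReal 0 1) := by
  letI : MeasureSpace ℝ := ⟨gaussianReal 0 1⟩
  haveI : SigmaFinite (volume : Measure ℝ) := by
    show SigmaFinite (gaussianReal 0 1); infer_instance
  have h : Integrable (fun W : ι → ℝ => ∏ i, Real.exp (c * α i * W i)) volume :=
    Integrable.fintype_prod (f := fun i x => Real.exp (c * α i * x))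
      (fun i => gauss_integrable_exp (c * α i))
  simp_rw [pi_exp_prod]
  exact h

lemma pi_mgf {ι : Type} [Fintype ι] (α : ι → ℝ) (c : ℝ) :
    ∫ W, Real.exp (c * ∑ i, α i * W i) ∂(Measure.pi fun _ : ι => gaussianReal 0 1)
      = Real.exp (c ^ 2 * (∑ i, (α i) ^ 2) / 2) := by
  letI : MeasureSpace ℝ := ⟨gaussianReal 0 1⟩
  haveI : SigmaFinite (volume : Measure ℝ) := by
    show SigmaFinite (gaussianReal 0 1); infer_instance
  simp_rw [pi_exp_prod]
  have h := MeasureTheory.integral_fintype_prod_eq_prod (𝕜 := ℝ) (ι := ι)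
    (fun i (x : ℝ) => Real.exp (c * α i * x)) (μ := fun _ => (volume : Measure ℝ))
  rw [show (Measure.pi fun _ : ι => gaussianReal 0 1) = (volume : Measure (ι → ℝ)) from rfl]
  erw [h]
  have : ∀ i, ∫ x : ℝ, Real.exp (c * α i * x) = Real.exp ((c * α i) ^ 2 / 2) :=
    fun i => gauss_mgf (c * α i)
  simp_rw [this, ← Real.exp_sum]
  congr 1
  rw [Finset.mul_sum, ← Finset.sum_div]
  congr 1; apply Finset.sum_congr rfl; intros; ring

lemma gauss_chernoff {ι : Type} [Fintype ι] (α : ι → ℝ) (s B : ℝ) (hB : 0 < B)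
    (hs : 0 ≤ s) (hα : ∑ i, (α i) ^ 2 ≤ B) :
    ((Measure.pi fun _ : ι => gaussianReal 0 1)
        {W : ι → ℝ | s ≤ ∑ i, α i * W i}).toReal ≤ Real.exp (-(s ^ 2) / (2 * B)) := by
  set μ := Measure.pi fun _ : ι => gaussianReal 0 1 with hμ
  have h := measure_ge_le_exp_mul_mgf (X := fun W : ι → ℝ => ∑ i, α i * W i) (μ := μ)
    (t := s / B) s (by positivity) (pi_mgf_integrable α (s / B))
  refine h.trans ?_
  rw [mgf, pi_mgf, ← Real.exp_add]
  apply Real.exp_le_exp.mpr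
  have h1 : (s / B) ^ 2 * (∑ i, (α i) ^ 2) / 2 ≤ (s / B) ^ 2 * B / 2 := by
    have : (0:ℝ) ≤ (s / B) ^ 2 := sq_nonneg _
    nlinarith
  have h2 : -(s / B) * s + (s / B) ^ 2 * B / 2 = -(s ^ 2) / (2 * B) := by
    field_simp; ring
  linarith

/-- coefficient of the CUSUM linear form -/
def coef (n t : ℕ) (r : ℕ) : ℝ :=
  if t ≤ r then Real.sqrt ((t : ℝ) * ((n : ℝ) - t) / n) * (1 / ((n : ℝ) - t))
  else -(Real.sqrt ((t : ℝ) * ((n : ℝ) - t) / n) * (1 / (t : ℝ)))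

lemma cusum_eq_sum (n : ℕ) {V : Type} (M : V × Fin n → ℝ) (j : V) (t : ℕ) :
    cusum n M j t = ∑ r : Fin n, coef n t (r : ℕ) * M (j, r) := by
  unfold cusum coef
  have hsplit : ∑ r : Fin n, (if t ≤ (r:ℕ) then Real.sqrt ((t : ℝ) * ((n : ℝ) - t) / n) * (1 / ((n : ℝ) - t))
      else -(Real.sqrt ((t : ℝ) * ((n : ℝ) - t) / n) * (1 / (t : ℝ)))) * M (j, r)
      = ∑ r ∈ univ.filter (fun r : Fin n => t ≤ (r : ℕ)),
          Real.sqrt ((t : ℝ) * ((n : ℝ) - t) / n) * (1 / ((n : ℝ) - t)) * M (j, r)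
        + ∑ r ∈ univ.filter (fun r : Fin n => ¬ t ≤ (r : ℕ)),
          -(Real.sqrt ((t : ℝ) * ((n : ℝ) - t) / n) * (1 / (t : ℝ))) * M (j, r) := by
    rw [← Finset.sum_filter_add_sum_filter_not univ (fun r : Fin n => t ≤ (r:ℕ))]
    congr 1
    · exact Finset.sum_congr rfl (fun r hr => by rw [if_pos (Finset.mem_filter.mp hr).2])
    · exact Finset.sum_congr rfl (fun r hr => by rw [if_neg (Finset.mem_filter.mp hr).2])
  have hfilt : univ.filter (fun r : Fin n => ¬ t ≤ (r : ℕ))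
      = univ.filter (fun r : Fin n => (r : ℕ) < t) := by
    apply Finset.filter_congr; intro x _; exact Nat.not_le
  rw [hsplit, hfilt, ← Finset.mul_sum, ← Finset.mul_sum]
  ring

lemma coef_eq (n t : ℕ) (h1 : 1 ≤ t) (h2 : t ≤ n - 1) (r : ℕ) :
    coef n t r = if t ≤ r then Real.sqrt ((t:ℝ)/((n:ℝ)*((n:ℝ)-t)))
      else -Real.sqrt (((n:ℝ)-t)/((n:ℝ)*t)) := by
  have hn : 2 ≤ n := by omega
  have ht : (1:ℝ) ≤ (t:ℝ) := by exact_mod_cast h1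
  have htn : (t:ℝ) ≤ (n:ℝ) - 1 := by
    have : t ≤ n - 1 := h2
    have : (t:ℝ) ≤ ((n - 1 : ℕ) : ℝ) := by exact_mod_cast this
    rwa [Nat.cast_sub (by omega), Nat.cast_one] at this
  have hnt : (0:ℝ) < (n:ℝ) - t := by linarith
  have htpos : (0:ℝ) < (t:ℝ) := by linarith
  have hnpos : (0:ℝ) < (n:ℝ) := by positivity
  have hX : (0:ℝ) ≤ (t:ℝ) * ((n:ℝ) - t) / n := by positivity
  unfold coef
  congr 1
  · have e1 : (t:ℝ)/((n:ℝ)*((n:ℝ)-t)) = ((t:ℝ) * ((n:ℝ) - t) / n) * (1/((n:ℝ)-t))^2 := by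
      field_simp
    rw [e1, Real.sqrt_mul hX, Real.sqrt_sq (by positivity)]
  · have e2 : ((n:ℝ)-t)/((n:ℝ)*t) = ((t:ℝ) * ((n:ℝ) - t) / n) * (1/(t:ℝ))^2 := by
      field_simp
    rw [e2, Real.sqrt_mul hX, Real.sqrt_sq (by positivity)]

lemma coef_diff_sq_sum (n a b : ℕ) (ha1 : 1 ≤ a) (hab : a ≤ b) (hb : b ≤ n - 1) :
    ∑ r ∈ Finset.range n, (coef n a r - coef n b r) ^ 2
      ≤ 3 * ((b:ℝ) - a) * (1/(b:ℝ) + 1/((n:ℝ) - a)) := by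
  have hn : 2 ≤ n := by omega
  have hA : (1:ℝ) ≤ (a:ℝ) := by exact_mod_cast ha1
  have hAB : (a:ℝ) ≤ (b:ℝ) := by exact_mod_cast hab
  have hBn : (b:ℝ) ≤ (n:ℝ) - 1 := by
    have : (b:ℝ) ≤ ((n - 1 : ℕ) : ℝ) := by exact_mod_cast hb
    rwa [Nat.cast_sub (by omega), Nat.cast_one] at this
  set A := (a:ℝ); set B := (b:ℝ); set Nn := (n:ℝ)
  have hNn : (0:ℝ) < Nn := by positivity
  have hNA : (0:ℝ) < Nn - A := by linarith
  have hNB : (0:ℝ) < Nn - B := by linarith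
  have hApos : (0:ℝ) < A := by linarith
  have hBpos : (0:ℝ) < B := by linarith
  set Pa := Real.sqrt (A/(Nn*(Nn-A))) with hPa
  set Pb := Real.sqrt (B/(Nn*(Nn-B))) with hPb
  set Na := Real.sqrt ((Nn-A)/(Nn*A)) with hNa
  set Nb := Real.sqrt ((Nn-B)/(Nn*B)) with hNb
  -- squares
  have hPa2 : Pa ^ 2 = A/(Nn*(Nn-A)) := Real.sq_sqrt (by positivity)
  have hPb2 : Pb ^ 2 = B/(Nn*(Nn-B)) := Real.sq_sqrt (by positivity)
  have hNa2 : Na ^ 2 = (Nn-A)/(Nn*A) := Real.sq_sqrt (by positivity)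
  have hNb2 : Nb ^ 2 = (Nn-B)/(Nn*B) := Real.sq_sqrt (by positivity)
  have hPa0 : 0 ≤ Pa := Real.sqrt_nonneg _
  have hPb0 : 0 ≤ Pb := Real.sqrt_nonneg _
  have hNa0 : 0 ≤ Na := Real.sqrt_nonneg _
  have hNb0 : 0 ≤ Nb := Real.sqrt_nonneg _
  -- monotonicity
  have hPmono : Pa ≤ Pb := by
    apply Real.sqrt_le_sqrt
    rw [div_le_div_iff₀ (by positivity) (by positivity)]
    nlinarith [mul_le_mul_of_nonneg_right hAB (mul_nonneg hNn.le hNn.le)]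
  have hNmono : Nb ≤ Na := by
    apply Real.sqrt_le_sqrt
    rw [div_le_div_iff₀ (by positivity) (by positivity)]
    nlinarith [mul_le_mul_of_nonneg_right hAB (mul_nonneg hNn.le hNn.le)]
  -- the sum splits into three regions
  have hsum : ∑ r ∈ Finset.range n, (coef n a r - coef n b r) ^ 2
      = A * (Nb - Na) ^ 2 + (B - A) * (Pa + Nb) ^ 2 + (Nn - B) * (Pa - Pb) ^ 2 := by
    have hcongr : ∀ r ∈ Finset.range n, (coef n a r - coef n b r) ^ 2
        = (if r < a then (Nb - Na)^2 else if r < b then (Pa + Nb)^2 else (Pa - Pb)^2) := by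
      intro r _
      rw [coef_eq n a ha1 (le_trans hab hb) r, coef_eq n b (le_trans ha1 hab) hb r]
      by_cases h1 : r < a
      · rw [if_pos h1, if_neg (by omega), if_neg (by omega)]; ring
      · by_cases h2 : r < b
        · rw [if_neg h1, if_pos h2, if_pos (by omega), if_neg (by omega)]; ring
        · rw [if_neg h1, if_neg h2, if_pos (by omega), if_pos (by omega)]
    rw [Finset.sum_congr rfl hcongr]
    rw [← Finset.sum_range_add_sum_Ico _ (show a ≤ n by omega),
      ← Finset.sum_Ico_consecutive _ (hab) (show b ≤ n by omega)]
    have e1 : ∑ r ∈ Finset.range a, (if r < a then (Nb - Na)^2 else if r < b then (Pa + Nb)^2 else (Pa - Pb)^2) = A * (Nb - Na)^2 := by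
      rw [Finset.sum_congr rfl (fun r hr => if_pos (Finset.mem_range.mp hr)),
        Finset.sum_const, Finset.card_range, nsmul_eq_mul]
    have e2 : ∑ r ∈ Finset.Ico a b, (if r < a then (Nb - Na)^2 else if r < b then (Pa + Nb)^2 else (Pa - Pb)^2) = (B - A) * (Pa + Nb)^2 := by
      rw [Finset.sum_congr rfl (fun r hr => by
        obtain ⟨hr1, hr2⟩ := Finset.mem_Ico.mp hr
        rw [if_neg (by omega), if_pos hr2]),
        Finset.sum_const, Nat.card_Ico, nsmul_eq_mul, Nat.cast_sub hab]
    have e3 : ∑ r ∈ Finset.Ico b n, (if r < a then (Nb - Na)^2 else if r < b then (Pa + Nb)^2 else (Pa - Pb)^2) = (Nn - B) * (Pa - Pb)^2 := by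
      rw [Finset.sum_congr rfl (fun r hr => by
        obtain ⟨hr1, hr2⟩ := Finset.mem_Ico.mp hr
        rw [if_neg (by omega), if_neg (by omega)]),
        Finset.sum_const, Nat.card_Ico, nsmul_eq_mul, Nat.cast_sub (by omega)]
    rw [e1, e2, e3]; ring
  rw [hsum]
  -- term bounds
  have hT1 : A * (Nb - Na) ^ 2 ≤ (B - A) / B := by
    have h1 : (Nb - Na)^2 ≤ Na^2 - Nb^2 := by
      nlinarith [mul_nonneg (sub_nonneg.mpr hNmono) hNb0]
    have h2 : Na^2 - Nb^2 = 1/A - 1/B := by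
      rw [hNa2, hNb2]; field_simp; ring
    have h3 : A * (Nb - Na)^2 ≤ A * (1/A - 1/B) := by
      rw [← h2]; exact mul_le_mul_of_nonneg_left h1 hApos.le
    have h4 : A * (1/A - 1/B) = (B - A)/B := by field_simp
    linarith
  have hT3 : (Nn - B) * (Pa - Pb) ^ 2 ≤ (B - A) / (Nn - A) := by
    have h1 : (Pa - Pb)^2 ≤ Pb^2 - Pa^2 := by
      nlinarith [mul_nonneg (sub_nonneg.mpr hPmono) hPa0]
    have h2 : (Nn - B) * (Pb^2 - Pa^2) = (B - A)/(Nn - A) := by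
      rw [hPa2, hPb2]; field_simp; ring
    have h3 : (Nn - B) * (Pa - Pb)^2 ≤ (Nn - B) * (Pb^2 - Pa^2) :=
      mul_le_mul_of_nonneg_left h1 hNB.le
    linarith
  have hT2 : (B - A) * (Pa + Nb) ^ 2 ≤ 2 * (B - A) * (1/(Nn - A) + 1/B) := by
    have h1 : (Pa + Nb)^2 ≤ 2 * (Pa^2 + Nb^2) := by nlinarith [sq_nonneg (Pa - Nb)]
    have h2 : Pa^2 + Nb^2 ≤ 1/(Nn-A) + 1/B := by
      rw [hPa2, hNb2]
      have i1 : A/(Nn*(Nn-A)) ≤ 1/(Nn-A) := by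
        rw [div_le_div_iff₀ (by positivity) hNA]; nlinarith [mul_nonneg hNA.le (sub_nonneg.mpr (by linarith : A ≤ Nn))]
      have i2 : (Nn-B)/(Nn*B) ≤ 1/B := by
        rw [div_le_div_iff₀ (by positivity) hBpos]; nlinarith [mul_nonneg hBpos.le (by linarith : (0:ℝ) ≤ B)]
      linarith
    have h3 : (B - A) * (Pa + Nb)^2 ≤ (B - A) * (2 * (1/(Nn-A) + 1/B)) := by
      apply mul_le_mul_of_nonneg_left _ (sub_nonneg.mpr hAB)
      calc (Pa + Nb)^2 ≤ 2 * (Pa^2 + Nb^2) := h1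
        _ ≤ 2 * (1/(Nn-A) + 1/B) := by linarith
    linarith
  have hfin : (B - A)/B + 2*(B-A)*(1/(Nn-A) + 1/B) + (B-A)/(Nn-A)
      = 3 * (B - A) * (1/B + 1/(Nn - A)) := by field_simp; ring
  linarith
lemma coef_diff_bound (n a b : ℕ) (τ : ℝ) (hτ : 0 < (n:ℝ)*τ)
    (ha1 : 1 ≤ a) (ha2 : a ≤ n - 1) (hb1 : 1 ≤ b) (hb2 : b ≤ n - 1)
    (h1 : (n:ℝ)*τ/2 ≤ (a:ℝ)) (h2 : (n:ℝ)*τ/2 ≤ (n:ℝ) - (a:ℝ)) :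
    ∑ r ∈ Finset.range n, (coef n a r - coef n b r) ^ 2
      ≤ 12 * |(a:ℝ) - (b:ℝ)| / ((n:ℝ)*τ) := by
  have hτ2 : 0 < (n:ℝ)*τ/2 := by linarith
  rcases le_or_gt a b with hab | hba
  · have hAB : (a:ℝ) ≤ (b:ℝ) := by exact_mod_cast hab
    have key := coef_diff_sq_sum n a b ha1 hab hb2
    have hBpos : (n:ℝ)*τ/2 ≤ (b:ℝ) := le_trans h1 hAB
    have i1 : 1/(b:ℝ) ≤ 2/((n:ℝ)*τ) := by
      rw [div_le_div_iff₀ (by linarith) hτ]; linarith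
    have i2 : 1/((n:ℝ) - a) ≤ 2/((n:ℝ)*τ) := by
      rw [div_le_div_iff₀ (by linarith) hτ]; linarith
    have habs : |(a:ℝ) - (b:ℝ)| = (b:ℝ) - a := by
      rw [abs_sub_comm]; exact abs_of_nonneg (by linarith)
    rw [habs]
    calc ∑ r ∈ Finset.range n, (coef n a r - coef n b r) ^ 2
        ≤ 3 * ((b:ℝ) - a) * (1/(b:ℝ) + 1/((n:ℝ) - a)) := key
      _ ≤ 3 * ((b:ℝ) - a) * (2/((n:ℝ)*τ) + 2/((n:ℝ)*τ)) := by
          apply mul_le_mul_of_nonneg_left (by linarith) (by linarith)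
      _ = 12 * ((b:ℝ) - a) / ((n:ℝ)*τ) := by field_simp; ring
  · have hBA : (b:ℝ) ≤ (a:ℝ) := by exact_mod_cast hba.le
    have key := coef_diff_sq_sum n b a hb1 hba.le ha2
    have hflip : ∑ r ∈ Finset.range n, (coef n a r - coef n b r) ^ 2
        = ∑ r ∈ Finset.range n, (coef n b r - coef n a r) ^ 2 := by
      apply Finset.sum_congr rfl; intro r _; ring
    have i1 : 1/(a:ℝ) ≤ 2/((n:ℝ)*τ) := by
      rw [div_le_div_iff₀ (by linarith) hτ]; linarith
    have i2 : 1/((n:ℝ) - b) ≤ 2/((n:ℝ)*τ) := by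
      rw [div_le_div_iff₀ (by linarith) hτ]; linarith
    have habs : |(a:ℝ) - (b:ℝ)| = (a:ℝ) - b := abs_of_nonneg (by linarith)
    rw [habs, hflip]
    calc ∑ r ∈ Finset.range n, (coef n b r - coef n a r) ^ 2
        ≤ 3 * ((a:ℝ) - b) * (1/(a:ℝ) + 1/((n:ℝ) - b)) := key
      _ ≤ 3 * ((a:ℝ) - b) * (2/((n:ℝ)*τ) + 2/((n:ℝ)*τ)) := by
          apply mul_le_mul_of_nonneg_left (by linarith) (by linarith)
      _ = 12 * ((a:ℝ) - b) / ((n:ℝ)*τ) := by field_simp; ring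
lemma dist_le_card {p : ℕ} (G : SimpleGraph (Fin p)) (h : G.Connected) (u v : Fin p) :
    G.dist u v ≤ p - 1 := by
  obtain ⟨w, hw⟩ := h.exists_walk_length_eq_dist u v
  have h1 := SimpleGraph.dist_le w.bypass
  have h2 := (w.bypass_isPath).length_lt
  simp only [Fintype.card_fin] at h2
  omega

lemma per_pair (n p : ℕ) (hp : 1 ≤ p) (G : SimpleGraph (Fin p)) (hG : G.Connected)
    (jstar kstar : Fin p) (zstar tstar : ℕ) (C1 τ : ℝ)
    (hnτpos : 0 < (n:ℝ)*τ)
    (hnτ : 2 * (p:ℝ) ≤ (n:ℝ)*τ)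
    (hzlow : (n:ℝ)*τ ≤ (zstar:ℝ)) (hzhigh : (n:ℝ)*τ ≤ (n:ℝ) - zstar)
    (hz1 : 1 ≤ zstar)
    (hpn : 1 < (p:ℝ) * n)
    (ht1 : 1 ≤ tstar)
    (hside : ∀ j ∈ JSet G.dist jstar zstar C1 tstar kstar, tstar + G.dist j kstar ≤ n - 1) :
    (Measure.pi fun _ : Fin p × Fin n => gaussianReal 0 1)
      {W : Fin p × Fin n → ℝ |
        7 * Real.sqrt (((JSet G.dist jstar zstar C1 tstar kstar).card : ℝ)
            * (|(zstar:ℝ) - (tstar:ℝ)| + (G.dist kstar jstar : ℝ)) * Real.log ((p:ℝ)*n) / ((n:ℝ)*τ))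
          < ∑ j ∈ JSet G.dist jstar zstar C1 tstar kstar,
              (cusum n W j (zstar + G.dist j jstar) - cusum n W j (tstar + G.dist j kstar))}
      ≤ ENNReal.ofReal ((((p:ℝ)*n) * ((p:ℝ)*n))⁻¹) := by
  have hppos : (0:ℝ) < p := by exact_mod_cast hp
  have hnpos : (0:ℝ) < n := by nlinarith
  have hn1 : 1 ≤ n := by exact_mod_cast hnpos
  set J := JSet G.dist jstar zstar C1 tstar kstar with hJ
  set D := |(zstar:ℝ) - (tstar:ℝ)| + (G.dist kstar jstar : ℝ) with hD
  set L := Real.log ((p:ℝ)*n) with hL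
  have hLpos : 0 < L := Real.log_pos hpn
  set s := 7 * Real.sqrt ((J.card : ℝ) * D * L / ((n:ℝ)*τ)) with hs
  have hD0 : 0 ≤ D := by positivity
  have hs0 : 0 ≤ s := by positivity
  have hdistR : ∀ u v : Fin p, (G.dist u v : ℝ) ≤ (p:ℝ) - 1 := by
    intro u v
    have h := dist_le_card G hG u v
    have : (G.dist u v : ℝ) ≤ ((p - 1 : ℕ) : ℝ) := by exact_mod_cast h
    rwa [Nat.cast_sub hp, Nat.cast_one] at this
  -- degenerate empties
  by_cases hJe : J = ∅
  · have : {W : Fin p × Fin n → ℝ | s < ∑ j ∈ J,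
        (cusum n W j (zstar + G.dist j jstar) - cusum n W j (tstar + G.dist j kstar))} = ∅ := by
      ext W
      simp only [Set.mem_setOf_eq, Set.mem_empty_iff_false, iff_false, not_lt, hJe,
        Finset.sum_empty]
      have : s = 0 := by rw [hs, hJe]; simp
      linarith
    rw [this]; simp
  by_cases hDe : D = 0
  · have hzt : (zstar : ℝ) = (tstar : ℝ) := by
      have h1 : |(zstar:ℝ) - (tstar:ℝ)| = 0 := by
        have := abs_nonneg ((zstar:ℝ) - (tstar:ℝ))
        have h2 : (0:ℝ) ≤ (G.dist kstar jstar : ℝ) := by positivity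
        linarith [hDe]
      have := abs_eq_zero.mp h1; linarith
    have hzt' : zstar = tstar := by exact_mod_cast hzt
    have hkj : kstar = jstar := by
      have h1 : (G.dist kstar jstar : ℝ) = 0 := by
        have := abs_nonneg ((zstar:ℝ) - (tstar:ℝ)); linarith [hDe]
      have h2 : G.dist kstar jstar = 0 := by exact_mod_cast h1
      rcases SimpleGraph.dist_eq_zero_iff_eq_or_not_reachable.mp h2 with h | h
      · exact h
      · exact absurd (hG.preconnected kstar jstar) h
    have hsum0 : ∀ W : Fin p × Fin n → ℝ, ∑ j ∈ J,
        (cusum n W j (zstar + G.dist j jstar) - cusum n W j (tstar + G.dist j kstar)) = 0 := by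
      intro W; apply Finset.sum_eq_zero; intro j _
      rw [hzt', hkj]; ring
    have : {W : Fin p × Fin n → ℝ | s < ∑ j ∈ J,
        (cusum n W j (zstar + G.dist j jstar) - cusum n W j (tstar + G.dist j kstar))} = ∅ := by
      ext W
      simp only [Set.mem_setOf_eq, Set.mem_empty_iff_false, iff_false, not_lt, hsum0 W]
      exact hs0
    rw [this]; simp
  -- main case
  have hDpos : 0 < D := lt_of_le_of_ne hD0 (Ne.symm hDe)
  have hJne : J.Nonempty := Finset.nonempty_iff_ne_empty.mpr hJe
  have hJcard : (0:ℝ) < (J.card : ℝ) := by exact_mod_cast Finset.card_pos.mpr hJne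
  set B := 12 * (J.card : ℝ) * D / ((n:ℝ)*τ) with hB
  have hBpos : 0 < B := by positivity
  set a : Fin p → ℕ := fun j => zstar + G.dist j jstar with ha
  set b : Fin p → ℕ := fun j => tstar + G.dist j kstar with hb
  set α : Fin p × Fin n → ℝ :=
    fun i => if i.1 ∈ J then coef n (a i.1) (i.2 : ℕ) - coef n (b i.1) (i.2 : ℕ) else 0 with hα
  have hXW : ∀ W : Fin p × Fin n → ℝ,
      ∑ j ∈ J, (cusum n W j (a j) - cusum n W j (b j)) = ∑ i : Fin p × Fin n, α i * W i := by
    intro W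
    rw [Fintype.sum_prod_type]
    have hinner : ∀ j : Fin p, ∑ r : Fin n, α (j, r) * W (j, r)
        = if j ∈ J then cusum n W j (a j) - cusum n W j (b j) else 0 := by
      intro j
      by_cases hj : j ∈ J
      · rw [if_pos hj, cusum_eq_sum, cusum_eq_sum, ← Finset.sum_sub_distrib]
        apply Finset.sum_congr rfl; intro r _
        show (if j ∈ J then coef n (a j) (r:ℕ) - coef n (b j) (r:ℕ) else 0) * W (j, r) = _
        rw [if_pos hj]; ring
      · rw [if_neg hj]
        apply Finset.sum_eq_zero; intro r _
        show (if j ∈ J then coef n (a j) (r:ℕ) - coef n (b j) (r:ℕ) else 0) * W (j, r) = 0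
        rw [if_neg hj, zero_mul]
    rw [Finset.sum_congr rfl (fun j _ => hinner j), Finset.sum_ite_mem, Finset.univ_inter]
  -- index facts
  have haup : ∀ j : Fin p, (zstar:ℝ) + (G.dist j jstar : ℝ) ≤ (n:ℝ) - 1 := by
    intro j; have := hdistR j jstar; linarith
  have ha2 : ∀ j : Fin p, a j ≤ n - 1 := by
    intro j
    have h := haup j
    have : ((a j : ℕ) : ℝ) ≤ ((n - 1 : ℕ) : ℝ) := by
      rw [Nat.cast_sub hn1, Nat.cast_one]
      show ((zstar + G.dist j jstar : ℕ) : ℝ) ≤ _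
      push_cast; linarith
    exact_mod_cast this
  have hα2 : ∑ i : Fin p × Fin n, (α i)^2 ≤ B := by
    rw [Fintype.sum_prod_type]
    have hterm : ∀ j : Fin p, ∑ r : Fin n, (α (j,r))^2
        ≤ (if j ∈ J then 12 * D / ((n:ℝ)*τ) else 0) := by
      intro j
      by_cases hj : j ∈ J
      · rw [if_pos hj]
        have heq : ∑ r : Fin n, (α (j,r))^2
            = ∑ r ∈ Finset.range n, (coef n (a j) r - coef n (b j) r)^2 := by
          rw [← Fin.sum_univ_eq_sum_range (fun r => (coef n (a j) r - coef n (b j) r)^2) n]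
          apply Finset.sum_congr rfl; intro r _
          show (if j ∈ J then coef n (a j) (r:ℕ) - coef n (b j) (r:ℕ) else 0)^2 = _
          rw [if_pos hj]
        rw [heq]
        have key := coef_diff_bound n (a j) (b j) τ hnτpos
          (by show 1 ≤ zstar + G.dist j jstar; omega) (ha2 j)
          (by show 1 ≤ tstar + G.dist j kstar; omega) (hside j hj)
          (by show (n:ℝ)*τ/2 ≤ ((zstar + G.dist j jstar : ℕ):ℝ)
              push_cast
              have : (0:ℝ) ≤ (G.dist j jstar : ℝ) := by positivity
              linarith)
          (by show (n:ℝ)*τ/2 ≤ (n:ℝ) - ((zstar + G.dist j jstar : ℕ):ℝ)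
              push_cast
              have := hdistR j jstar
              linarith)
        refine key.trans ?_
        have habD : |((a j : ℕ) : ℝ) - ((b j : ℕ) : ℝ)| ≤ D := by
          have t1 : G.dist j jstar ≤ G.dist j kstar + G.dist kstar jstar := hG.dist_triangle
          have t2 : G.dist j kstar ≤ G.dist j jstar + G.dist jstar kstar := hG.dist_triangle
          have hcm : G.dist jstar kstar = G.dist kstar jstar := SimpleGraph.dist_comm
          have t1R : (G.dist j jstar : ℝ) ≤ (G.dist j kstar : ℝ) + (G.dist kstar jstar : ℝ) := by
            exact_mod_cast t1
          have t2R : (G.dist j kstar : ℝ) ≤ (G.dist j jstar : ℝ) + (G.dist kstar jstar : ℝ) := by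
            rw [← hcm]; exact_mod_cast t2
          show |((zstar + G.dist j jstar : ℕ):ℝ) - ((tstar + G.dist j kstar : ℕ):ℝ)| ≤ D
          push_cast
          have habs : |(zstar:ℝ) + (G.dist j jstar : ℝ) - ((tstar:ℝ) + (G.dist j kstar : ℝ))|
              ≤ |(zstar:ℝ) - (tstar:ℝ)| + |(G.dist j jstar : ℝ) - (G.dist j kstar : ℝ)| := by
            rw [show (zstar:ℝ) + (G.dist j jstar : ℝ) - ((tstar:ℝ) + (G.dist j kstar : ℝ))
                = ((zstar:ℝ) - (tstar:ℝ)) + ((G.dist j jstar : ℝ) - (G.dist j kstar : ℝ)) by ring]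
            exact abs_add_le _ _
          have h2 : |(G.dist j jstar : ℝ) - (G.dist j kstar : ℝ)| ≤ (G.dist kstar jstar : ℝ) :=
            abs_le.mpr ⟨by linarith, by linarith⟩
          rw [hD]
          linarith
        gcongr
      · rw [if_neg hj]
        apply le_of_eq
        apply Finset.sum_eq_zero; intro r _
        show (if j ∈ J then coef n (a j) (r:ℕ) - coef n (b j) (r:ℕ) else 0)^2 = 0
        rw [if_neg hj]; ring
    refine (Finset.sum_le_sum (fun j _ => hterm j)).trans ?_
    rw [Finset.sum_ite_mem, Finset.univ_inter, Finset.sum_const, nsmul_eq_mul, hB]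
    apply le_of_eq; ring
  -- Chernoff and numerics
  have hs2 : s ^ 2 = 49 * ((J.card : ℝ) * D * L / ((n:ℝ)*τ)) := by
    rw [hs, mul_pow, Real.sq_sqrt (by positivity)]; norm_num
  have hratio : -(s ^ 2) / (2 * B) = -(49/24 * L) := by
    rw [hs2, hB]
    have hτ0 : τ ≠ 0 := by rintro rfl; simp at hnτpos
    field_simp
    ring
  have hnum : Real.exp (-(s ^ 2) / (2 * B)) ≤ (((p:ℝ)*n) * ((p:ℝ)*n))⁻¹ := by
    rw [hratio]
    have h1 : Real.exp (-(49/24 * L)) ≤ Real.exp (-(2 * L)) := by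
      apply Real.exp_le_exp.mpr; linarith
    have h2 : Real.exp (-(2 * L)) = (((p:ℝ)*n) * ((p:ℝ)*n))⁻¹ := by
      rw [show -(2*L) = -(L + L) by ring, Real.exp_neg, Real.exp_add, hL,
        Real.exp_log (by linarith : (0:ℝ) < (p:ℝ)*n)]
    linarith
  have hch := gauss_chernoff α s B hBpos hs0 hα2
  have hsub : {W : Fin p × Fin n → ℝ | s < ∑ j ∈ J,
        (cusum n W j (zstar + G.dist j jstar) - cusum n W j (tstar + G.dist j kstar))}
      ⊆ {W : Fin p × Fin n → ℝ | s ≤ ∑ i : Fin p × Fin n, α i * W i} := by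
    intro W hW
    rw [Set.mem_setOf_eq, ← hXW]
    exact le_of_lt hW
  calc (Measure.pi fun _ : Fin p × Fin n => gaussianReal 0 1) {W : Fin p × Fin n → ℝ | s < ∑ j ∈ J,
        (cusum n W j (zstar + G.dist j jstar) - cusum n W j (tstar + G.dist j kstar))}
      ≤ (Measure.pi fun _ : Fin p × Fin n => gaussianReal 0 1)
          {W : Fin p × Fin n → ℝ | s ≤ ∑ i : Fin p × Fin n, α i * W i} := measure_mono hsub
    _ ≤ ENNReal.ofReal (Real.exp (-(s ^ 2) / (2 * B))) := by
        rw [← ENNReal.ofReal_toReal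
          (measure_ne_top (Measure.pi fun _ : Fin p × Fin n => gaussianReal 0 1) _)]
        exact ENNReal.ofReal_le_ofReal hch
    _ ≤ ENNReal.ofReal ((((p:ℝ)*n) * ((p:ℝ)*n))⁻¹) := ENNReal.ofReal_le_ofReal hnum

/-- Proposition 5: uniform control of the noise CUSUM differences over candidate
change-point/source pairs. -/
theorem cusum_noise_difference_bound :
    ∃ C : ℝ, 0 < C ∧
      ∀ (n p : ℕ), 1 ≤ n → 1 ≤ p →
      ∀ (G : SimpleGraph (Fin p)), G.Connected →
      ∀ (jstar : Fin p) (zstar : ℕ), 1 ≤ zstar → zstar ≤ n - 1 →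
      ∀ (C1 τ : ℝ), 0 < C1 →
        τ = min ((zstar : ℝ) / n) (1 - (zstar : ℝ) / n) →
        2 * (p : ℝ) ≤ (n : ℝ) * τ →
        1 - 1 / ((p : ℝ) * n) ≤
          ((Measure.pi fun _ : Fin p × Fin n => gaussianReal 0 1)
            {W : Fin p × Fin n → ℝ | ∀ (tstar : ℕ) (kstar : Fin p),
              1 ≤ tstar → tstar ≤ n - 1 →
              (∀ j ∈ JSet G.dist jstar zstar C1 tstar kstar,
                tstar + G.dist j kstar ≤ n - 1) →
              ∑ j ∈ JSet G.dist jstar zstar C1 tstar kstar,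
                  (cusum n W j (zstar + G.dist j jstar)
                    - cusum n W j (tstar + G.dist j kstar)) ≤
                C * Real.sqrt (((JSet G.dist jstar zstar C1 tstar kstar).card : ℝ)
                    * (|(zstar : ℝ) - (tstar : ℝ)| + (G.dist kstar jstar : ℝ))
                    * Real.log ((p : ℝ) * n) / ((n : ℝ) * τ))}).toReal := by
  refine ⟨7, by norm_num, ?_⟩
  intro n p hn hp G hG jstar zstar hz1 hz2 C1 τ hC1 hτdef hnτ
  have hppos : (0:ℝ) < p := by exact_mod_cast hp
  have hnpos : (0:ℝ) < n := by exact_mod_cast hn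
  have hnτpos : (0:ℝ) < (n:ℝ) * τ := lt_of_lt_of_le (by positivity) hnτ
  have hτhalf : τ ≤ 1/2 := by
    rcases le_total ((zstar:ℝ)/n) (1 - (zstar:ℝ)/n) with h|h
    · rw [hτdef, min_eq_left h]
      have : (0:ℝ) ≤ (zstar:ℝ)/n := by positivity
      linarith
    · rw [hτdef, min_eq_right h]
      have : (0:ℝ) ≤ (zstar:ℝ)/n := by positivity
      linarith
  have hzlow : (n:ℝ)*τ ≤ (zstar:ℝ) := by
    have h1 : τ ≤ (zstar:ℝ)/n := hτdef ▸ min_le_left _ _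
    have := mul_le_mul_of_nonneg_left h1 hnpos.le
    calc (n:ℝ)*τ ≤ (n:ℝ) * ((zstar:ℝ)/n) := this
      _ = (zstar:ℝ) := by field_simp
  have hzhigh : (n:ℝ)*τ ≤ (n:ℝ) - zstar := by
    have h1 : τ ≤ 1 - (zstar:ℝ)/n := hτdef ▸ min_le_right _ _
    have := mul_le_mul_of_nonneg_left h1 hnpos.le
    calc (n:ℝ)*τ ≤ (n:ℝ) * (1 - (zstar:ℝ)/n) := this
      _ = (n:ℝ) - zstar := by field_simp
  have hpn : (1:ℝ) < (p:ℝ) * n := by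
    have hp1 : (1:ℝ) ≤ (p:ℝ) := by exact_mod_cast hp
    nlinarith [mul_le_mul_of_nonneg_left hτhalf hnpos.le,
      mul_nonneg (sub_nonneg.mpr hp1) hnpos.le]
  set μ := Measure.pi fun _ : Fin p × Fin n => gaussianReal 0 1 with hμ
  haveI : IsProbabilityMeasure μ := by rw [hμ]; infer_instance
  -- abbreviations
  set X : ℕ → Fin p → (Fin p × Fin n → ℝ) → ℝ := fun t k W =>
    ∑ j ∈ JSet G.dist jstar zstar C1 t k,
      (cusum n W j (zstar + G.dist j jstar) - cusum n W j (t + G.dist j k)) with hX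
  set sb : ℕ → Fin p → ℝ := fun t k =>
    7 * Real.sqrt (((JSet G.dist jstar zstar C1 t k).card : ℝ)
      * (|(zstar : ℝ) - (t : ℝ)| + (G.dist k jstar : ℝ))
      * Real.log ((p : ℝ) * n) / ((n : ℝ) * τ)) with hsb
  set good : Set (Fin p × Fin n → ℝ) := {W | ∀ (tstar : ℕ) (kstar : Fin p),
      1 ≤ tstar → tstar ≤ n - 1 →
      (∀ j ∈ JSet G.dist jstar zstar C1 tstar kstar, tstar + G.dist j kstar ≤ n - 1) →
      X tstar kstar W ≤ sb tstar kstar} with hgood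
  show 1 - 1 / ((p : ℝ) * n) ≤ (μ good).toReal
  -- measurability
  have hcusum_meas : ∀ (j : Fin p) (t : ℕ), Measurable fun W : Fin p × Fin n → ℝ =>
      cusum n W j t := by
    intro j t
    unfold cusum
    apply Measurable.const_mul
    apply Measurable.sub <;>
    · apply Measurable.const_mul
      apply Finset.measurable_sum
      intro r _
      exact measurable_pi_apply _
  have hXmeas : ∀ (t : ℕ) (k : Fin p), Measurable (X t k) := by
    intro t k
    apply Finset.measurable_sum
    intro j _
    exact (hcusum_meas j _).sub (hcusum_meas j _)
  have hgood_meas : MeasurableSet good := by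
    have : good = ⋂ (t : ℕ), ⋂ (k : Fin p), {W | 1 ≤ t → t ≤ n - 1 →
        (∀ j ∈ JSet G.dist jstar zstar C1 t k, t + G.dist j k ≤ n - 1) →
        X t k W ≤ sb t k} := by
      ext W; simp only [hgood, Set.mem_setOf_eq, Set.mem_iInter]
    rw [this]
    apply MeasurableSet.iInter; intro t
    apply MeasurableSet.iInter; intro k
    by_cases hc : 1 ≤ t ∧ t ≤ n - 1 ∧
        (∀ j ∈ JSet G.dist jstar zstar C1 t k, t + G.dist j k ≤ n - 1)
    · have : {W : Fin p × Fin n → ℝ | 1 ≤ t → t ≤ n - 1 →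
          (∀ j ∈ JSet G.dist jstar zstar C1 t k, t + G.dist j k ≤ n - 1) →
          X t k W ≤ sb t k} = {W | X t k W ≤ sb t k} := by
        ext W; simp only [Set.mem_setOf_eq]
        exact ⟨fun h => h hc.1 hc.2.1 hc.2.2, fun h _ _ _ => h⟩
      rw [this]
      exact measurableSet_le (hXmeas t k) measurable_const
    · have : {W : Fin p × Fin n → ℝ | 1 ≤ t → t ≤ n - 1 →
          (∀ j ∈ JSet G.dist jstar zstar C1 t k, t + G.dist j k ≤ n - 1) →
          X t k W ≤ sb t k} = Set.univ := by
        apply Set.eq_univ_iff_forall.mpr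
        intro W h1 h2 h3
        exact absurd ⟨h1, h2, h3⟩ hc
      rw [this]
      exact MeasurableSet.univ
  -- bad sets
  set bad : ℕ → Fin p → Set (Fin p × Fin n → ℝ) := fun t k =>
    if (1 ≤ t ∧ t ≤ n - 1 ∧
        (∀ j ∈ JSet G.dist jstar zstar C1 t k, t + G.dist j k ≤ n - 1))
    then {W | sb t k < X t k W} else ∅ with hbad
  have hsubset : goodᶜ ⊆ ⋃ t ∈ Finset.Icc 1 (n-1), ⋃ k : Fin p, bad t k := by
    intro W hW
    simp only [hgood, Set.mem_compl_iff, Set.mem_setOf_eq, not_forall] at hW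
    obtain ⟨t, k, h1, h2, h3, h4⟩ := hW
    refine Set.mem_biUnion (Finset.mem_Icc.mpr ⟨h1, h2⟩) ?_
    refine Set.mem_iUnion.mpr ⟨k, ?_⟩
    rw [hbad]
    simp only [if_pos (⟨h1, h2, h3⟩ : _ ∧ _ ∧ _)]
    exact lt_of_not_ge h4
  have hbad_le : ∀ t ∈ Finset.Icc 1 (n-1), ∀ k : Fin p,
      μ (bad t k) ≤ ENNReal.ofReal ((((p:ℝ)*n) * ((p:ℝ)*n))⁻¹) := by
    intro t ht k
    rw [hbad]
    by_cases hc : 1 ≤ t ∧ t ≤ n - 1 ∧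
        (∀ j ∈ JSet G.dist jstar zstar C1 t k, t + G.dist j k ≤ n - 1)
    · simp only [if_pos hc]
      exact per_pair n p hp G hG jstar k zstar t C1 τ hnτpos hnτ hzlow hzhigh hz1 hpn hc.1 hc.2.2
    · simp only [if_neg hc]
      simp
  have hunion : μ goodᶜ ≤ ENNReal.ofReal (1 / ((p:ℝ)*n)) := by
    calc μ goodᶜ ≤ μ (⋃ t ∈ Finset.Icc 1 (n-1), ⋃ k : Fin p, bad t k) := measure_mono hsubset
      _ ≤ ∑ t ∈ Finset.Icc 1 (n-1), μ (⋃ k : Fin p, bad t k) := measure_biUnion_finset_le _ _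
      _ ≤ ∑ t ∈ Finset.Icc 1 (n-1), ∑ k ∈ (Finset.univ : Finset (Fin p)), μ (bad t k) := by
          apply Finset.sum_le_sum
          intro t _
          have : (⋃ k : Fin p, bad t k) = ⋃ k ∈ (Finset.univ : Finset (Fin p)), bad t k := by
            simp
          rw [this]
          exact measure_biUnion_finset_le _ _
      _ ≤ ∑ t ∈ Finset.Icc 1 (n-1), ∑ k ∈ (Finset.univ : Finset (Fin p)),
            ENNReal.ofReal ((((p:ℝ)*n) * ((p:ℝ)*n))⁻¹) := by
          apply Finset.sum_le_sum; intro t ht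
          apply Finset.sum_le_sum; intro k _
          exact hbad_le t ht k
      _ = ((Finset.Icc 1 (n-1)).card * p) • ENNReal.ofReal ((((p:ℝ)*n) * ((p:ℝ)*n))⁻¹) := by
          rw [Finset.sum_const, Finset.sum_const, Finset.card_univ, Fintype.card_fin, smul_smul]
      _ = ((n-1) * p) • ENNReal.ofReal ((((p:ℝ)*n) * ((p:ℝ)*n))⁻¹) := by
          rw [Nat.card_Icc]
          congr 2 <;> omega
      _ = ENNReal.ofReal ((((n-1) * p : ℕ) : ℝ) * (((p:ℝ)*n) * ((p:ℝ)*n))⁻¹) := by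
          rw [nsmul_eq_mul, ← ENNReal.ofReal_natCast ((n-1)*p),
            ← ENNReal.ofReal_mul (by positivity)]
      _ ≤ ENNReal.ofReal (1 / ((p:ℝ)*n)) := by
          apply ENNReal.ofReal_le_ofReal
          have hcast : (((n-1) * p : ℕ) : ℝ) ≤ (p:ℝ) * n := by
            push_cast
            have : ((n-1 : ℕ) : ℝ) ≤ (n:ℝ) := by
              have : (n-1 : ℕ) ≤ n := by omega
              exact_mod_cast this
            nlinarith
          rw [mul_inv, one_div]
          calc (((n-1) * p : ℕ) : ℝ) * (((p:ℝ)*n)⁻¹ * ((p:ℝ)*n)⁻¹)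
              ≤ ((p:ℝ)*n) * (((p:ℝ)*n)⁻¹ * ((p:ℝ)*n)⁻¹) := by
                apply mul_le_mul_of_nonneg_right hcast (by positivity)
            _ = ((p:ℝ)*n)⁻¹ := by field_simp
  -- conclude
  have hfin1 : μ good ≠ ⊤ := measure_ne_top μ _
  have hfin2 : μ goodᶜ ≠ ⊤ := measure_ne_top μ _
  have hsum1 : (μ good).toReal + (μ goodᶜ).toReal = 1 := by
    rw [← ENNReal.toReal_add hfin1 hfin2, measure_add_measure_compl hgood_meas]
    simp
  have h2 : (μ goodᶜ).toReal ≤ 1 / ((p:ℝ)*n) := by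
    have := ENNReal.toReal_mono ENNReal.ofReal_ne_top hunion
    rwa [ENNReal.toReal_ofReal (by positivity)] at this
  linarith

end
end

section
/- Let G be a connected graph on vertex set {1,…,p} with graph distance d_G, fix j* ∈ {1,…,p}, z* ∈ {1,…,n}, and μ⁰, μ¹ ∈ ℝ^p with θ_j := μ¹_j − μ⁰_j > 0. Let μ ∈ ℝ^{p×n} be the matrix with entries μ_{j,t} = μ⁰_j if t ≤ z* + d_G(j, j*) and μ_{j,t} = μ¹_j if t > z* + d_G(j, j*), set A := 𝒯(μ), and suppose z := z* + d_G(j, j*) satisfies 1 ≤ z ≤ n − 1. Then the sequence t ↦ A_{j,t} is nondecreasing for t ∈ {1,…,z} and nonincreasing for t ∈ {z,…,n−1}; in particular it attains its maximum over t ∈ {1,…,n−1} at t = z. -/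
open MeasureTheory ProbabilityTheory Finset

noncomputable section

attribute [local instance] Classical.propDecidable

lemma sum_filter_ge (n t : ℕ) (g : ℕ → ℝ) :
    ∑ r ∈ univ.filter (fun r : Fin n => t ≤ (r : ℕ)), g (r : ℕ) = ∑ r ∈ Finset.Ico t n, g r := by
  rw [Finset.sum_filter, Fin.sum_univ_eq_sum_range (fun r => if t ≤ r then g r else 0) n,
    ← Finset.sum_filter]
  congr 1
  ext r
  simp [Finset.mem_Ico, Finset.mem_range]
  omega

lemma sum_filter_lt (n t : ℕ) (ht : t ≤ n) (g : ℕ → ℝ) :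
    ∑ r ∈ univ.filter (fun r : Fin n => (r : ℕ) < t), g (r : ℕ) = ∑ r ∈ Finset.range t, g r := by
  rw [Finset.sum_filter, Fin.sum_univ_eq_sum_range (fun r => if r < t then g r else 0) n,
    ← Finset.sum_filter]
  congr 1
  ext r
  simp [Finset.mem_range]
  omega

lemma sum_step (a b z : ℕ) (hab : a ≤ z) (hzb : z ≤ b) (x y : ℝ) :
    ∑ r ∈ Finset.Ico a b, (if r + 1 ≤ z then x else y)
      = ((z : ℝ) - a) * x + ((b : ℝ) - z) * y := by
  rw [← Finset.sum_Ico_consecutive _ hab hzb]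
  have h1 : ∑ r ∈ Finset.Ico a z, (if r + 1 ≤ z then x else y) = ((z : ℝ) - a) * x := by
    rw [Finset.sum_congr rfl (fun r hr => if_pos (by simp [Finset.mem_Ico] at hr; omega)),
      Finset.sum_const, Nat.card_Ico, nsmul_eq_mul, Nat.cast_sub hab]
  have h2 : ∑ r ∈ Finset.Ico z b, (if r + 1 ≤ z then x else y) = ((b : ℝ) - z) * y := by
    rw [Finset.sum_congr rfl (fun r hr => if_neg (by simp [Finset.mem_Ico] at hr; omega)),
      Finset.sum_const, Nat.card_Ico, nsmul_eq_mul, Nat.cast_sub hzb]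
  rw [h1, h2]

lemma cusum_eq_left {V : Type} (n : ℕ) (M : V × Fin n → ℝ) (j : V) (z t : ℕ) (x y : ℝ)
    (hM : ∀ r : Fin n, M (j, r) = if (r : ℕ) + 1 ≤ z then x else y)
    (ht1 : 1 ≤ t) (htz : t ≤ z) (hzn : z + 1 ≤ n) :
    cusum n M j t = (y - x) * ((n : ℝ) - z) * Real.sqrt ((t : ℝ) / ((n : ℝ) * ((n : ℝ) - t))) := by
  have htn : t + 1 ≤ n := by omega
  have h1 : ∑ r ∈ univ.filter (fun r : Fin n => t ≤ (r : ℕ)), M (j, r)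
      = ((z : ℝ) - t) * x + ((n : ℝ) - z) * y := by
    rw [Finset.sum_congr rfl (fun r _ => hM r),
      sum_filter_ge n t (fun r => if r + 1 ≤ z then x else y), sum_step t n z htz (by omega)]
  have h2 : ∑ r ∈ univ.filter (fun r : Fin n => (r : ℕ) < t), M (j, r) = (t : ℝ) * x := by
    rw [Finset.sum_congr rfl (fun r _ => hM r),
      sum_filter_lt n t (by omega) (fun r => if r + 1 ≤ z then x else y)]
    rw [Finset.sum_congr rfl (fun r hr => if_pos (by simp [Finset.mem_range] at hr; omega)),
      Finset.sum_const, Finset.card_range, nsmul_eq_mul]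
  rw [cusum, h1, h2]
  have ha : (0 : ℝ) < t := by exact_mod_cast ht1
  have hb : (0 : ℝ) < (n : ℝ) - t := by
    have : (t : ℝ) + 1 ≤ n := by exact_mod_cast htn
    linarith
  have hn : (0 : ℝ) < n := by exact_mod_cast (by omega : 0 < n)
  have key : ((t : ℝ) * ((n : ℝ) - t) / n) = ((t : ℝ) / ((n : ℝ) * ((n : ℝ) - t))) * ((n : ℝ) - t) ^ 2 := by
    field_simp
  rw [key, Real.sqrt_mul (by positivity), Real.sqrt_sq hb.le]
  field_simp
  ring

lemma cusum_eq_right {V : Type} (n : ℕ) (M : V × Fin n → ℝ) (j : V) (z t : ℕ) (x y : ℝ)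
    (hM : ∀ r : Fin n, M (j, r) = if (r : ℕ) + 1 ≤ z then x else y)
    (hz1 : 1 ≤ z) (hzt : z ≤ t) (htn : t + 1 ≤ n) :
    cusum n M j t = (y - x) * (z : ℝ) * Real.sqrt (((n : ℝ) - t) / ((n : ℝ) * (t : ℝ))) := by
  have h1 : ∑ r ∈ univ.filter (fun r : Fin n => t ≤ (r : ℕ)), M (j, r)
      = ((n : ℝ) - t) * y := by
    rw [Finset.sum_congr rfl (fun r _ => hM r),
      sum_filter_ge n t (fun r => if r + 1 ≤ z then x else y)]
    rw [Finset.sum_congr rfl (fun r hr => if_neg (by simp [Finset.mem_Ico] at hr; omega)),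
      Finset.sum_const, Nat.card_Ico, nsmul_eq_mul, Nat.cast_sub (by omega)]
  have h2 : ∑ r ∈ univ.filter (fun r : Fin n => (r : ℕ) < t), M (j, r)
      = (z : ℝ) * x + ((t : ℝ) - z) * y := by
    rw [Finset.sum_congr rfl (fun r _ => hM r),
      sum_filter_lt n t (by omega) (fun r => if r + 1 ≤ z then x else y),
      Finset.range_eq_Ico, sum_step 0 t z (by omega) hzt]
    simp
  rw [cusum, h1, h2]
  have ha : (0 : ℝ) < t := by exact_mod_cast (by omega : 0 < t)
  have hb : (0 : ℝ) < (n : ℝ) - t := by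
    have : (t : ℝ) + 1 ≤ n := by exact_mod_cast htn
    linarith
  have hn : (0 : ℝ) < n := by exact_mod_cast (by omega : 0 < n)
  have key : ((t : ℝ) * ((n : ℝ) - t) / n) = (((n : ℝ) - t) / ((n : ℝ) * t)) * (t : ℝ) ^ 2 := by
    field_simp
  rw [key, Real.sqrt_mul (by positivity), Real.sqrt_sq ha.le]
  field_simp
  ring
/-- Unimodality of the CUSUM transform of the mean matrix: it is nondecreasing up to
the time of spread z = z* + d_G(j, j*) and nonincreasing afterwards, hence maximised
at t = z. -/
theorem cusum_mean_unimodal :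
    ∀ (n p : ℕ), 1 ≤ n → 1 ≤ p →
    ∀ (G : SimpleGraph (Fin p)), G.Connected →
    ∀ (jstar : Fin p) (zstar : ℕ), 1 ≤ zstar → zstar ≤ n →
    ∀ (μ0 μ1 : Fin p → ℝ) (M : Fin p × Fin n → ℝ),
      M = (fun jt : Fin p × Fin n =>
        if (jt.2 : ℕ) + 1 ≤ zstar + G.dist jt.1 jstar then μ0 jt.1 else μ1 jt.1) →
    ∀ j : Fin p, 0 < μ1 j - μ0 j →
    ∀ z : ℕ, z = zstar + G.dist j jstar → 1 ≤ z → z ≤ n - 1 →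
      (∀ t : ℕ, 1 ≤ t → t < z → cusum n M j t ≤ cusum n M j (t + 1)) ∧
      (∀ t : ℕ, z ≤ t → t + 1 ≤ n - 1 → cusum n M j (t + 1) ≤ cusum n M j t) ∧
      (∀ t : ℕ, 1 ≤ t → t ≤ n - 1 → cusum n M j t ≤ cusum n M j z) := by
  intro n p hn hp G hG jstar zstar hzs1 hzs2 μ0 μ1 M hM j hθ z hzdef hz1 hz2
  have hMj : ∀ r : Fin n, M (j, r) = if (r : ℕ) + 1 ≤ z then μ0 j else μ1 j := by
    intro r; rw [hM, hzdef]
  have hzn : z + 1 ≤ n := by omega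
  have hA : ∀ t : ℕ, 1 ≤ t → t ≤ z → cusum n M j t
      = (μ1 j - μ0 j) * ((n : ℝ) - z) * Real.sqrt ((t : ℝ) / ((n : ℝ) * ((n : ℝ) - t))) :=
    fun t h1 h2 => cusum_eq_left n M j z t _ _ hMj h1 h2 hzn
  have hB : ∀ t : ℕ, z ≤ t → t + 1 ≤ n → cusum n M j t
      = (μ1 j - μ0 j) * (z : ℝ) * Real.sqrt (((n : ℝ) - t) / ((n : ℝ) * t)) :=
    fun t h1 h2 => cusum_eq_right n M j z t _ _ hMj hz1 h1 h2
  have hznR : (z : ℝ) + 1 ≤ n := by exact_mod_cast hzn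
  have mono1 : ∀ s t : ℕ, 1 ≤ s → s ≤ t → t ≤ z → cusum n M j s ≤ cusum n M j t := by
    intro s t h1 h2 h3
    rw [hA s h1 (le_trans h2 h3), hA t (le_trans h1 h2) h3]
    have hsR : (s : ℝ) ≤ t := by exact_mod_cast h2
    have htR : (t : ℝ) ≤ z := by exact_mod_cast h3
    have hnt : (0 : ℝ) < (n : ℝ) - t := by linarith
    have hnpos : (0 : ℝ) < n := by linarith
    apply mul_le_mul_of_nonneg_left
    · apply Real.sqrt_le_sqrt
      apply div_le_div₀ (by positivity) hsR (by positivity)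
      apply mul_le_mul_of_nonneg_left (by linarith) hnpos.le
    · exact mul_nonneg hθ.le (by linarith)
  have mono2 : ∀ s t : ℕ, z ≤ s → s ≤ t → t + 1 ≤ n → cusum n M j t ≤ cusum n M j s := by
    intro s t h1 h2 h3
    rw [hB s h1 (by omega), hB t (le_trans h1 h2) h3]
    have hsR : (s : ℝ) ≤ t := by exact_mod_cast h2
    have hzsR : (z : ℝ) ≤ s := by exact_mod_cast h1
    have htR : (t : ℝ) + 1 ≤ n := by exact_mod_cast h3
    have hspos : (0 : ℝ) < s := by linarith [(by exact_mod_cast hz1 : (1 : ℝ) ≤ (z : ℝ))]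
    have hnpos : (0 : ℝ) < n := by linarith
    apply mul_le_mul_of_nonneg_left
    · apply Real.sqrt_le_sqrt
      apply div_le_div₀ (by linarith) (by linarith) (by positivity)
      apply mul_le_mul_of_nonneg_left hsR hnpos.le
    · exact mul_nonneg hθ.le (by positivity)
  refine ⟨fun t h1 h2 => mono1 t (t + 1) h1 (by omega) (by omega),
          fun t h1 h2 => mono2 t (t + 1) h1 (by omega) (by omega),
          fun t h1 h2 => ?_⟩
  rcases le_total t z with h | h
  · exact mono1 t z h1 h le_rfl
  · exact mono2 z t le_rfl h (by omega)

end
end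

section
/- Let n > 0 be a real number and let t, z be real numbers with 0 < t ≤ z < n. Then | √(n/(z(n − z))) − √(n/(t(n − t))) | ≤ √2·(z − t) / min(t, n − z)^{3/2}. -/
open MeasureTheory ProbabilityTheory Finset

noncomputable section

attribute [local instance] Classical.propDecidable

/-- Mean value bound for the difference of CUSUM normalisation factors. -/
theorem sqrt_normalisation_difference_bound :
    ∀ n t z : ℝ, 0 < t → t ≤ z → z < n →
      |Real.sqrt (n / (z * (n - z))) - Real.sqrt (n / (t * (n - t)))| ≤
        Real.sqrt 2 * (z - t) / (min t (n - z)) ^ ((3 : ℝ) / 2) := by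
  intro n t z ht htz hzn
  have hn : 0 < n := lt_of_le_of_lt (le_of_lt (lt_of_lt_of_le ht htz)) hzn
  set m : ℝ := min t (n - z) with hmdef
  have hm0 : 0 < m := lt_min ht (by linarith)
  have hsm : 0 < Real.sqrt m := Real.sqrt_pos.2 hm0
  set C : ℝ := Real.sqrt 2 / (m * Real.sqrt m) with hC
  have hcube : m ^ ((3:ℝ)/2) = m * Real.sqrt m := by
    rw [show ((3:ℝ)/2) = 1 + 1/2 by norm_num, Real.rpow_add hm0, Real.rpow_one,
      ← Real.sqrt_eq_rpow]
  set f : ℝ → ℝ := fun x => Real.sqrt (n / (x * (n - x))) with hf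
  set F' : ℝ → ℝ := fun x =>
    (-(n * (n - 2*x)) / (x*(n-x))^2) / (2 * Real.sqrt (n/(x*(n-x)))) with hF'
  have hderiv : ∀ x ∈ Set.Icc t z, HasDerivWithinAt f (F' x) (Set.Icc t z) x := by
    intro x hx
    have hx1 : 0 < x := lt_of_lt_of_le ht hx.1
    have hx2 : 0 < n - x := by have h2 := hx.2; linarith
    have hd : 0 < x * (n - x) := mul_pos hx1 hx2
    have h1 : HasDerivAt (fun x : ℝ => x * (n - x)) (n - 2*x) x := by
      have := (hasDerivAt_id x).mul ((hasDerivAt_const x n).sub (hasDerivAt_id x))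
      refine this.congr_deriv ?_
      simp only [Pi.sub_apply, id]
      ring
    have hg : HasDerivAt (fun x => n / (x * (n - x))) (-(n * (n - 2*x)) / (x*(n-x))^2) x := by
      have := (hasDerivAt_const x n).div h1 hd.ne'
      refine this.congr_deriv ?_
      ring
    have hgx : n / (x * (n - x)) ≠ 0 := (div_pos hn hd).ne'
    exact (hg.sqrt hgx).hasDerivWithinAt
  have hbound : ∀ x ∈ Set.Icc t z, ‖F' x‖ ≤ C := by
    intro x hx
    have hx1 : 0 < x := lt_of_lt_of_le ht hx.1
    have hx2 : 0 < n - x := by have h2 := hx.2; linarith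
    set d : ℝ := x * (n - x) with hd'
    have hd : 0 < d := mul_pos hx1 hx2
    have hsd : 0 < Real.sqrt d := Real.sqrt_pos.2 hd
    have hsn : 0 < Real.sqrt n := Real.sqrt_pos.2 hn
    have hsplit : Real.sqrt (n / d) = Real.sqrt n / Real.sqrt d :=
      Real.sqrt_div hn.le d
    have habs : ‖F' x‖ = Real.sqrt n * |n - 2*x| * Real.sqrt d / (2 * d^2) := by
      rw [hF']
      simp only [Real.norm_eq_abs]
      rw [hsplit, abs_div, abs_div, abs_neg, abs_mul, abs_of_nonneg hn.le]
      rw [abs_of_nonneg (by positivity : (0:ℝ) ≤ (d:ℝ)^2),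
        abs_of_nonneg (by positivity : (0:ℝ) ≤ 2 * (Real.sqrt n / Real.sqrt d))]
      field_simp
      have hns : Real.sqrt n ^ 2 = n := Real.sq_sqrt hn.le
      linear_combination (-|n - 2*x|) * hns
    rw [habs, hC]
    rw [div_le_div_iff₀ (by positivity) (by positivity)]
    have hxm : m ≤ x := le_trans (min_le_left _ _) hx.1
    have hnxm : m ≤ n - x := le_trans (min_le_right _ _) (by have h2 := hx.2; linarith)
    have hdmn : m * n / 2 ≤ d := by
      rw [hd']
      nlinarith [mul_nonneg (sub_nonneg.2 hxm) hx2.le,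
        mul_nonneg (sub_nonneg.2 hnxm) hx1.le]
    have habsbd : |n - 2*x| ≤ n := by
      rw [abs_le]; constructor <;> nlinarith
    have hs2 : (0:ℝ) < Real.sqrt 2 := by positivity
    have hkey : Real.sqrt n * n * (m * Real.sqrt m) ≤ 2 * Real.sqrt 2 * (d * Real.sqrt d) := by
      have h1 : (m * n / 2) * Real.sqrt (m * n / 2) ≤ d * Real.sqrt d :=
        mul_le_mul hdmn (Real.sqrt_le_sqrt hdmn) (Real.sqrt_nonneg _) hd.le
      have h2 : Real.sqrt (m * n / 2) = Real.sqrt m * Real.sqrt n / Real.sqrt 2 := by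
        rw [Real.sqrt_div (by positivity) 2, Real.sqrt_mul hm0.le]
      have h3 := mul_le_mul_of_nonneg_left h1 (by positivity : (0:ℝ) ≤ 2 * Real.sqrt 2)
      rw [h2] at h3
      have heq : Real.sqrt n * n * (m * Real.sqrt m) =
          2 * Real.sqrt 2 * (m * n / 2 * (Real.sqrt m * Real.sqrt n / Real.sqrt 2)) := by
        have h4 : Real.sqrt 2 ≠ 0 := hs2.ne'
        field_simp
      rw [heq]
      exact h3
    calc Real.sqrt n * |n - 2*x| * Real.sqrt d * (m * Real.sqrt m)
        ≤ Real.sqrt n * n * Real.sqrt d * (m * Real.sqrt m) :=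
          mul_le_mul_of_nonneg_right
            (mul_le_mul_of_nonneg_right (mul_le_mul_of_nonneg_left habsbd hsn.le) hsd.le)
            (by positivity)
      _ = (Real.sqrt n * n * (m * Real.sqrt m)) * Real.sqrt d := by ring
      _ ≤ (2 * Real.sqrt 2 * (d * Real.sqrt d)) * Real.sqrt d :=
          mul_le_mul_of_nonneg_right hkey hsd.le
      _ = Real.sqrt 2 * (2 * d^2) := by
          have h : Real.sqrt d * Real.sqrt d = d := Real.mul_self_sqrt hd.le
          linear_combination (2 * Real.sqrt 2 * d) * h
  have hmv := Convex.norm_image_sub_le_of_norm_hasDerivWithin_le hderiv hbound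
    (convex_Icc t z) (Set.left_mem_Icc.2 htz) (Set.right_mem_Icc.2 htz)
  rw [Real.norm_eq_abs, Real.norm_eq_abs,
    abs_of_nonneg (by linarith : (0:ℝ) ≤ z - t)] at hmv
  rw [hcube]
  calc |f z - f t| ≤ C * (z - t) := hmv
    _ = Real.sqrt 2 * (z - t) / (m * Real.sqrt m) := by rw [hC]; ring

end
end

section
/- Let B, λ, q, L be nonnegative real numbers. If λ ≥ 2√(qL) + 2L and B ≥ 8λ, then B − 2√((q + 2B)·L) ≥ λ. -/
open MeasureTheory ProbabilityTheory Finset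

noncomputable section

attribute [local instance] Classical.propDecidable

/-- Elementary inequality used in the power analysis of the SpreadDetect test. -/
theorem noncentral_chisq_threshold_ineq :
    ∀ B lam q L : ℝ, 0 ≤ B → 0 ≤ lam → 0 ≤ q → 0 ≤ L →
      2 * Real.sqrt (q * L) + 2 * L ≤ lam → 8 * lam ≤ B →
      lam ≤ B - 2 * Real.sqrt ((q + 2 * B) * L) := by
  intro B lam q L hB hlam hq hL h1 h2
  set s1 := Real.sqrt (q * L) with hs1def
  set s2 := Real.sqrt (2 * B * L) with hs2def
  have hs1 : s1 ^ 2 = q * L := Real.sq_sqrt (mul_nonneg hq hL)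
  have hs2sq : s2 ^ 2 = 2 * B * L := Real.sq_sqrt (by positivity)
  have hs1n : 0 ≤ s1 := Real.sqrt_nonneg _
  have hs2n : 0 ≤ s2 := Real.sqrt_nonneg _
  have hs3 : Real.sqrt ((q + 2 * B) * L) ≤ s1 + s2 := by
    have hle : (q + 2 * B) * L ≤ (s1 + s2) ^ 2 := by
      nlinarith [mul_nonneg hs1n hs2n]
    calc Real.sqrt ((q + 2 * B) * L) ≤ Real.sqrt ((s1 + s2) ^ 2) :=
          Real.sqrt_le_sqrt hle
      _ = s1 + s2 := by
          rw [Real.sqrt_sq (by linarith)]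
  have hs2b : s2 ≤ B / 4 + 2 * L := by
    have hle : 2 * B * L ≤ (B / 4 + 2 * L) ^ 2 := by nlinarith [sq_nonneg (B / 4 - 2 * L)]
    calc s2 ≤ Real.sqrt ((B / 4 + 2 * L) ^ 2) := Real.sqrt_le_sqrt hle
      _ = B / 4 + 2 * L := Real.sqrt_sq (by linarith)
  linarith

end
end
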